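/- arXiv:1912.10782 — 5 statements merged into one kernel-verified Lean document; each statement's English description precedes it below -/
import Mathlib

section
/- Normal form for Morse complexes (existence part of the orbit decomposition): for every Morse complex d ∈ MC(C;K) there exist an involution ρ ∈ GNR(C) and an automorphism g ∈ B(C;K) such that d = g ∘ d_ρ ∘ g^{−1}. In other words, MC(C;K) = ⋃_{ρ ∈ GNR(C)} B(C;K)·d_ρ, a union of finitely many conjugation orbits of canonical differentials. -/
/-!
Setup: `K` a field, `n ≥ 1`, `μ : Fin n → ℤ` a Maslov potential.  `C = ⊕ₐ K·eₐ` is the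
graded vector space with `deg eₐ = -μ a` and decreasing filtration `Fⁱ C = span {eₐ : i ≤ a}`
(indices shifted to be `0`-based).  Linear maps `C → C` are encoded as matrices, where
`d b a` is the coefficient of `e b` in `d (e a)`.
-/

namespace AugSheaf

variable {K : Type*} [Field K] {n : ℕ}

/-- `d` is a Morse complex differential: homogeneous of degree `+1` (with respect to
`deg eₐ = -μ a`), filtration preserving, and `d ∘ d = 0`. -/
def IsMorse (μ : Fin n → ℤ) (d : Matrix (Fin n) (Fin n) K) : Prop :=
  (∀ b a : Fin n, d b a ≠ 0 → μ b = μ a - 1) ∧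
  (∀ b a : Fin n, d b a ≠ 0 → a ≤ b) ∧
  d * d = 0

/-- Membership in `B(C;K)`: a degree-`0` automorphism `g` of `C` with `g (Fⁱ C) = Fⁱ C`
(equivalently, both `g` and `g⁻¹` preserve the filtration). -/
def IsFilteredAut (μ : Fin n → ℤ) (g : Matrix (Fin n) (Fin n) K) : Prop :=
  IsUnit g ∧ (∀ b a : Fin n, g b a ≠ 0 → μ b = μ a) ∧
    (∀ b a : Fin n, g b a ≠ 0 → a ≤ b) ∧ (∀ b a : Fin n, g⁻¹ b a ≠ 0 → a ≤ b)

/-- Membership in `GNR(C)`: an involution `ρ` (fixed points allowed) such that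
`ρ a = b` with `a < b` implies `μ b = μ a - 1`. -/
def IsGNR (μ : Fin n → ℤ) (ρ : Equiv.Perm (Fin n)) : Prop :=
  (∀ a, ρ (ρ a) = a) ∧ ∀ a b : Fin n, ρ a = b → a < b → μ b = μ a - 1

/-- The canonical differential `d_ρ`: `d_ρ eₐ = (-1)^(μ a) e_(ρ a)` if `a < ρ a`, else `0`. -/
def canonDiff (K : Type*) [Field K] {n : ℕ} (μ : Fin n → ℤ) (ρ : Equiv.Perm (Fin n)) :
    Matrix (Fin n) (Fin n) K :=
  fun b a => if ρ a = b ∧ a < b then (-1 : K) ^ (μ a) else 0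

open Matrix


/-- If an entry of a product is nonzero, some intermediate index works. -/
lemma exists_entry_ne_zero {N : ℕ} {A B : Matrix (Fin N) (Fin N) K} {b a : Fin N}
    (h : (A * B) b a ≠ 0) : ∃ c, A b c ≠ 0 ∧ B c a ≠ 0 := by
  by_contra hc
  push_neg at hc
  apply h
  rw [Matrix.mul_apply]
  refine Finset.sum_eq_zero fun c _ => ?_
  by_cases h1 : A b c = 0
  · simp [h1]
  · simp [hc c h1]

/-- The inverse of a graded invertible matrix is graded. -/
lemma inv_graded {N : ℕ} {μ : Fin N → ℤ} {g : Matrix (Fin N) (Fin N) K}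
    (hu : IsUnit g) (hg : ∀ b a, g b a ≠ 0 → μ b = μ a) :
    ∀ b a, g⁻¹ b a ≠ 0 → μ b = μ a := by
  have hdet : IsUnit g.det := (Matrix.isUnit_iff_isUnit_det g).mp hu
  set Γ : Matrix (Fin N) (Fin N) K := Matrix.of fun b a => if μ b = μ a then g⁻¹ b a else 0 with hΓ
  have key : g * Γ = 1 := by
    ext b a
    have h1 : (g * g⁻¹) b a = (1 : Matrix (Fin N) (Fin N) K) b a := by
      rw [Matrix.mul_nonsing_inv g hdet]
    by_cases hba : μ b = μ a
    · rw [Matrix.mul_apply] at h1 ⊢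
      rw [← h1]
      refine Finset.sum_congr rfl fun c _ => ?_
      by_cases hbc : g b c = 0
      · simp [hbc, hΓ]
      · simp [hΓ, Matrix.of_apply, (hg b c hbc).symm.trans hba]
    · have : (1 : Matrix (Fin N) (Fin N) K) b a = 0 := by
        apply Matrix.one_apply_ne
        rintro rfl; exact hba rfl
      rw [this, Matrix.mul_apply]
      refine Finset.sum_eq_zero fun c _ => ?_
      by_cases hbc : g b c = 0
      · simp [hbc]
      · have : ¬ μ c = μ a := fun h => hba ((hg b c hbc).trans h)
        simp [hΓ, this]
  have : g⁻¹ = Γ := Matrix.inv_eq_right_inv key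
  intro b a hba
  rw [this] at hba
  by_contra hne
  simp [hΓ, hne] at hba

/-- Filtered automorphisms are closed under multiplication. -/
lemma IsFilteredAut.mul {N : ℕ} {μ : Fin N → ℤ} {g h : Matrix (Fin N) (Fin N) K}
    (hg : IsFilteredAut μ g) (hh : IsFilteredAut μ h) : IsFilteredAut μ (g * h) := by
  obtain ⟨hgu, hgμ, hgt, hgit⟩ := hg
  obtain ⟨hhu, hhμ, hht, hhit⟩ := hh
  refine ⟨hgu.mul hhu, ?_, ?_, ?_⟩
  · intro b a hba
    obtain ⟨c, h1, h2⟩ := exists_entry_ne_zero hba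
    exact (hgμ b c h1).trans (hhμ c a h2)
  · intro b a hba
    obtain ⟨c, h1, h2⟩ := exists_entry_ne_zero hba
    exact (hht c a h2).trans (hgt b c h1)
  · intro b a hba
    rw [Matrix.mul_inv_rev] at hba
    obtain ⟨c, h1, h2⟩ := exists_entry_ne_zero hba
    exact (hgit c a h2).trans (hhit b c h1)

lemma mul_vecMulVec {N : ℕ} (M : Matrix (Fin N) (Fin N) K) (u w : Fin N → K) :
    M * vecMulVec u w = vecMulVec (M *ᵥ u) w := by
  ext b a
  simp only [Matrix.mul_apply, vecMulVec_apply, Matrix.mulVec, dotProduct,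
    Finset.sum_mul]
  exact Finset.sum_congr rfl fun c _ => by ring

lemma vecMulVec_mul {N : ℕ} (M : Matrix (Fin N) (Fin N) K) (u w : Fin N → K) :
    vecMulVec u w * M = vecMulVec u (w ᵥ* M) := by
  ext b a
  simp only [Matrix.mul_apply, vecMulVec_apply, Matrix.vecMul, dotProduct,
    Finset.mul_sum]
  exact Finset.sum_congr rfl fun c _ => by ring

lemma vecMulVec_mul_vecMulVec {N : ℕ} (u w u' w' : Fin N → K) :
    vecMulVec u w * vecMulVec u' w' = (w ⬝ᵥ u') • vecMulVec u w' := by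
  ext b a
  simp only [Matrix.mul_apply, vecMulVec_apply, dotProduct, Matrix.smul_apply,
    Finset.sum_mul, Finset.mul_sum, smul_eq_mul]
  exact Finset.sum_congr rfl fun c _ => by ring

/-- Column of `canonDiff` at a fixed point is zero. -/
lemma canonDiff_col_fixed {N : ℕ} (μ : Fin N → ℤ) (σ : Equiv.Perm (Fin N)) {k : Fin N}
    (hk : σ k = k) (b : Fin N) : canonDiff K μ σ b k = 0 := by
  unfold canonDiff
  rw [if_neg]
  rintro ⟨h1, h2⟩
  rw [hk] at h1
  exact absurd h1 (ne_of_lt h2)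

/-- Row of `canonDiff` at a fixed point is zero (needs involutivity). -/
lemma canonDiff_row_fixed {N : ℕ} (μ : Fin N → ℤ) (σ : Equiv.Perm (Fin N))
    (hinv : ∀ a, σ (σ a) = a) {k : Fin N} (hk : σ k = k) (a : Fin N) :
    canonDiff K μ σ k a = 0 := by
  unfold canonDiff
  rw [if_neg]
  rintro ⟨h1, h2⟩
  have : a = k := by rw [← hinv a, h1, hk]
  exact absurd this (ne_of_lt h2)

/-- Formula for `canonDiff *ᵥ x` for an involution. -/
lemma canonDiff_mulVec {N : ℕ} (μ : Fin N → ℤ) (σ : Equiv.Perm (Fin N))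
    (hinv : ∀ a, σ (σ a) = a) (x : Fin N → K) (b : Fin N) :
    (canonDiff K μ σ *ᵥ x) b = if σ b < b then (-1 : K) ^ (μ (σ b)) * x (σ b) else 0 := by
  have hcond : ∀ a : Fin N, (σ a = b ∧ a < b) ↔ (a = σ b ∧ σ b < b) := by
    intro a
    constructor
    · rintro ⟨h1, h2⟩
      have : a = σ b := by rw [← h1, hinv]
      exact ⟨this, this ▸ h2⟩
    · rintro ⟨h1, h2⟩
      exact ⟨by rw [h1, hinv], h1 ▸ h2⟩
  have : ∀ a : Fin N, canonDiff K μ σ b a * x a =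
      if a = σ b then (if σ b < b then (-1 : K) ^ (μ (σ b)) * x (σ b) else 0) else 0 := by
    intro a
    unfold canonDiff
    by_cases h : σ a = b ∧ a < b
    · rw [if_pos h]
      obtain ⟨h1, h2⟩ := (hcond a).mp h
      subst h1
      rw [if_pos rfl, if_pos h2]
    · rw [if_neg h, zero_mul]
      by_cases ha : a = σ b
      · rw [if_pos ha, if_neg]
        intro hlt
        exact h ((hcond a).mpr ⟨ha, hlt⟩)
      · rw [if_neg ha]
  rw [Matrix.mulVec, dotProduct]
  rw [Finset.sum_congr rfl fun a _ => this a]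
  rw [Finset.sum_ite_eq' Finset.univ (σ b)]
  simp

/-- `canonDiff` squares to zero (for an involution). -/
lemma canonDiff_sq {N : ℕ} (μ : Fin N → ℤ) (σ : Equiv.Perm (Fin N))
    (hinv : ∀ a, σ (σ a) = a) :
    canonDiff K μ σ * canonDiff K μ σ = 0 := by
  ext b a
  rw [Matrix.mul_apply, Matrix.zero_apply]
  refine Finset.sum_eq_zero fun c _ => ?_
  unfold canonDiff
  by_cases h1 : σ a = c ∧ a < c
  · rw [if_pos h1]
    rw [if_neg, zero_mul]
    rintro ⟨h2, h3⟩
    have hca : σ c = a := by rw [← h1.1, hinv]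
    rw [hca] at h2
    subst h2
    exact absurd h1.2 (not_lt.mpr h3.le)
  · rw [if_neg h1, mul_zero]

lemma canonDiff_graded {N : ℕ} (μ : Fin N → ℤ) (σ : Equiv.Perm (Fin N))
    (hσ : IsGNR μ σ) : ∀ b a, canonDiff K μ σ b a ≠ 0 → μ b = μ a - 1 := by
  intro b a h
  unfold canonDiff at h
  by_cases hc : σ a = b ∧ a < b
  · exact hσ.2 a b hc.1 hc.2
  · rw [if_neg hc] at h; exact absurd rfl h

lemma canonDiff_tri {N : ℕ} (μ : Fin N → ℤ) (σ : Equiv.Perm (Fin N)) :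
    ∀ b a : Fin N, canonDiff K μ σ b a ≠ 0 → a ≤ b := by
  intro b a h
  unfold canonDiff at h
  by_cases hc : σ a = b ∧ a < b
  · exact hc.2.le
  · rw [if_neg hc] at h; exact absurd rfl h
/-- Explicit inverse for `1 + u ⊗ eₖᵀ` when `u k = 0`. -/
lemma elem_mul_elem {N : ℕ} (u : Fin N → K) (k : Fin N) (hu : u k = 0) :
    (1 + vecMulVec u (Pi.single k 1)) * (1 - vecMulVec u (Pi.single k 1)) = 1 := by
  have hd : (Pi.single k (1:K)) ⬝ᵥ u = 0 := by
    simp [dotProduct, Pi.single_apply, ite_mul, hu]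
  rw [mul_sub, add_mul, add_mul, one_mul, mul_one, vecMulVec_mul_vecMulVec, hd]
  simp

lemma elem_mul_elem' {N : ℕ} (u : Fin N → K) (k : Fin N) (hu : u k = 0) :
    (1 - vecMulVec u (Pi.single k 1)) * (1 + vecMulVec u (Pi.single k 1)) = 1 := by
  have hd : (Pi.single k (1:K)) ⬝ᵥ u = 0 := by
    simp [dotProduct, Pi.single_apply, ite_mul, hu]
  rw [mul_add, sub_mul, sub_mul, one_mul, mul_one, vecMulVec_mul_vecMulVec, hd]
  simp

lemma elem_apply {N : ℕ} (u : Fin N → K) (k : Fin N) (b a : Fin N) :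
    (1 + vecMulVec u (Pi.single k 1)) b a
      = (if b = a then 1 else 0) + (if a = k then u b else 0) := by
  simp [Matrix.add_apply, Matrix.one_apply, vecMulVec_apply, Pi.single_apply]

lemma elem_apply_neg {N : ℕ} (u : Fin N → K) (k : Fin N) (b a : Fin N) :
    (1 - vecMulVec u (Pi.single k 1)) b a
      = (if b = a then 1 else 0) - (if a = k then u b else 0) := by
  simp [Matrix.sub_apply, Matrix.one_apply, vecMulVec_apply, Pi.single_apply]

/-- An elementary filtered matrix `1 + u ⊗ eₖᵀ` is a filtered automorphism. -/
lemma elem_filtered {N : ℕ} (μ : Fin N → ℤ) (u : Fin N → K) (k : Fin N) (hu : u k = 0)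
    (hμ : ∀ b, u b ≠ 0 → μ b = μ k) (ht : ∀ b, u b ≠ 0 → k ≤ b) :
    IsFilteredAut μ (1 + vecMulVec u (Pi.single k 1)) := by
  have hinv : (1 + vecMulVec u (Pi.single k 1))⁻¹ = 1 - vecMulVec u (Pi.single k 1) :=
    Matrix.inv_eq_right_inv (elem_mul_elem u k hu)
  refine ⟨@isUnit_of_invertible _ _ _ (invertibleOfRightInverse _ _ (elem_mul_elem u k hu)), ?_, ?_, ?_⟩
  · intro b a h
    rw [elem_apply] at h
    by_cases hba : b = a
    · rw [hba]
    · by_cases hak : a = k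
      · subst hak
        refine hμ b fun h0 => h ?_
        simp [hba, h0]
      · simp [hba, hak] at h
  · intro b a h
    rw [elem_apply] at h
    by_cases hba : b = a
    · exact hba ▸ le_refl a
    · by_cases hak : a = k
      · subst hak
        refine ht b fun h0 => h ?_
        simp [hba, h0]
      · simp [hba, hak] at h
  · intro b a h
    rw [hinv, elem_apply_neg] at h
    by_cases hba : b = a
    · exact hba ▸ le_refl a
    · by_cases hak : a = k
      · subst hak
        refine ht b fun h0 => h ?_
        simp [hba, h0]
      · simp [hba, hak] at h

/-- A diagonal matrix with nonzero entries and constant... is filtered. -/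
lemma diagonal_filtered {N : ℕ} (μ : Fin N → ℤ) (δ : Fin N → K) (hδ : ∀ b, δ b ≠ 0) :
    IsFilteredAut μ (Matrix.diagonal δ) := by
  have h1 : Matrix.diagonal δ * Matrix.diagonal (fun b => (δ b)⁻¹) = 1 := by
    have h2 : (fun i => δ i * (δ i)⁻¹) = fun _ => (1:K) :=
      funext fun b => mul_inv_cancel₀ (hδ b)
    rw [Matrix.diagonal_mul_diagonal, h2, Matrix.diagonal_one]
  have hinv : (Matrix.diagonal δ)⁻¹ = Matrix.diagonal (fun b => (δ b)⁻¹) :=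
    Matrix.inv_eq_right_inv h1
  refine ⟨@isUnit_of_invertible _ _ _ (invertibleOfRightInverse _ _ h1), ?_, ?_, ?_⟩
  · intro b a h
    by_cases hba : b = a
    · rw [hba]
    · exact absurd (Matrix.diagonal_apply_ne δ hba) h
  · intro b a h
    by_cases hba : b = a
    · exact hba ▸ le_refl a
    · exact absurd (Matrix.diagonal_apply_ne δ hba) h
  · intro b a h
    rw [hinv] at h
    by_cases hba : b = a
    · exact hba ▸ le_refl a
    · exact absurd (Matrix.diagonal_apply_ne _ hba) h

/-- Extension of a matrix on `Fin n` to `Fin (n+1)` by identity in the corner. -/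
def ext1 {N : ℕ} (M : Matrix (Fin N) (Fin N) K) : Matrix (Fin (N+1)) (Fin (N+1)) K :=
  Matrix.of fun b a =>
    if hb : b = 0 then (if a = 0 then 1 else 0)
    else if ha : a = 0 then 0 else M (b.pred hb) (a.pred ha)

/-- Extension of a matrix on `Fin n` to `Fin (n+1)` by zero in the corner. -/
def ext0 {N : ℕ} (M : Matrix (Fin N) (Fin N) K) : Matrix (Fin (N+1)) (Fin (N+1)) K :=
  Matrix.of fun b a =>
    if hb : b = 0 then 0
    else if ha : a = 0 then 0 else M (b.pred hb) (a.pred ha)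

@[simp] lemma ext1_zero_zero {N : ℕ} (M : Matrix (Fin N) (Fin N) K) : ext1 M 0 0 = 1 := by
  simp [ext1]

@[simp] lemma ext1_zero_succ {N : ℕ} (M : Matrix (Fin N) (Fin N) K) (a : Fin N) :
    ext1 M 0 a.succ = 0 := by
  simp [ext1, Fin.succ_ne_zero]

@[simp] lemma ext1_succ_zero {N : ℕ} (M : Matrix (Fin N) (Fin N) K) (b : Fin N) :
    ext1 M b.succ 0 = 0 := by
  simp [ext1, Fin.succ_ne_zero]

@[simp] lemma ext1_succ_succ {N : ℕ} (M : Matrix (Fin N) (Fin N) K) (b a : Fin N) :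
    ext1 M b.succ a.succ = M b a := by
  simp [ext1, Fin.succ_ne_zero]

@[simp] lemma ext0_zero {N : ℕ} (M : Matrix (Fin N) (Fin N) K) (a : Fin (N+1)) :
    ext0 M 0 a = 0 := by
  simp [ext0]

@[simp] lemma ext0_succ_zero {N : ℕ} (M : Matrix (Fin N) (Fin N) K) (b : Fin N) :
    ext0 M b.succ 0 = 0 := by
  simp [ext0, Fin.succ_ne_zero]

@[simp] lemma ext0_succ_succ {N : ℕ} (M : Matrix (Fin N) (Fin N) K) (b a : Fin N) :
    ext0 M b.succ a.succ = M b a := by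
  simp [ext0, Fin.succ_ne_zero]

@[simp] lemma ext1_one {N : ℕ} : ext1 (1 : Matrix (Fin N) (Fin N) K) = 1 := by
  ext b a
  refine Fin.cases ?_ (fun b' => ?_) b <;> refine Fin.cases ?_ (fun a' => ?_) a
  · simp
  · simp [Matrix.one_apply, (Fin.succ_ne_zero a').symm]
  · simp [Matrix.one_apply, Fin.succ_ne_zero b']
  · simp [Matrix.one_apply, Fin.succ_inj]

lemma ext1_mul_ext1 {N : ℕ} (A B : Matrix (Fin N) (Fin N) K) :
    ext1 A * ext1 B = ext1 (A * B) := by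
  ext b a
  rw [Matrix.mul_apply, Fin.sum_univ_succ]
  refine Fin.cases ?_ (fun b' => ?_) b <;> refine Fin.cases ?_ (fun a' => ?_) a <;>
    simp [Matrix.mul_apply]

lemma ext1_mul_ext0 {N : ℕ} (A B : Matrix (Fin N) (Fin N) K) :
    ext1 A * ext0 B = ext0 (A * B) := by
  ext b a
  rw [Matrix.mul_apply, Fin.sum_univ_succ]
  refine Fin.cases ?_ (fun b' => ?_) b <;> refine Fin.cases ?_ (fun a' => ?_) a <;>
    simp [Matrix.mul_apply]

lemma ext0_mul_ext1 {N : ℕ} (A B : Matrix (Fin N) (Fin N) K) :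
    ext0 A * ext1 B = ext0 (A * B) := by
  ext b a
  rw [Matrix.mul_apply, Fin.sum_univ_succ]
  refine Fin.cases ?_ (fun b' => ?_) b <;> refine Fin.cases ?_ (fun a' => ?_) a <;>
    simp [Matrix.mul_apply]

/-- Row 0 of `ext1 A`, as a vecMul. -/
lemma single_vecMul_ext1 {N : ℕ} (A : Matrix (Fin N) (Fin N) K) :
    (Pi.single 0 1 : Fin (N+1) → K) ᵥ* ext1 A = Pi.single 0 1 := by
  funext a
  rw [Matrix.single_vecMul]
  refine Fin.cases ?_ (fun a' => ?_) a
  · simp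
  · simp [Pi.single_apply, (Fin.succ_ne_zero a').symm]

/-- `ext1` of a filtered automorphism is filtered (w.r.t. the extended potential). -/
lemma ext1_filtered {N : ℕ} (μ : Fin (N+1) → ℤ) (g : Matrix (Fin N) (Fin N) K)
    (hg : IsFilteredAut (fun a => μ a.succ) g) : IsFilteredAut μ (ext1 g) := by
  obtain ⟨hu, hμ, ht, hit⟩ := hg
  have hdet : IsUnit g.det := (Matrix.isUnit_iff_isUnit_det g).mp hu
  have h1 : ext1 g * ext1 g⁻¹ = 1 := by
    rw [ext1_mul_ext1, Matrix.mul_nonsing_inv g hdet, ext1_one]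
  have hinv : (ext1 g)⁻¹ = ext1 g⁻¹ := Matrix.inv_eq_right_inv h1
  have hμinv : ∀ b a, g⁻¹ b a ≠ 0 → (fun a => μ a.succ) b = (fun a => μ a.succ) a :=
    inv_graded hu hμ
  refine ⟨@isUnit_of_invertible _ _ _ (invertibleOfRightInverse _ _ h1), ?_, ?_, ?_⟩
  · intro b a h
    refine Fin.cases ?_ (fun b' => ?_) b h <;> refine Fin.cases ?_ (fun a' => ?_) a <;>
      intro h
    · rfl
    · simp at h
    · simp at h
    · exact hμ b' a' (by simpa using h)
  · intro b a h
    refine Fin.cases ?_ (fun b' => ?_) b h <;> refine Fin.cases ?_ (fun a' => ?_) a <;>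
      intro h
    · exact le_refl _
    · simp at h
    · exact Fin.zero_le _
    · exact Fin.succ_le_succ_iff.mpr (ht b' a' (by simpa using h))
  · intro b a h
    rw [hinv] at h
    refine Fin.cases ?_ (fun b' => ?_) b h <;> refine Fin.cases ?_ (fun a' => ?_) a <;>
      intro h
    · exact le_refl _
    · simp at h
    · exact Fin.zero_le _
    · exact Fin.succ_le_succ_iff.mpr (hit b' a' (by simpa using h))
lemma exists_mulVec_ne_zero {N : ℕ} {M : Matrix (Fin N) (Fin N) K} {x : Fin N → K} {b : Fin N}
    (h : (M *ᵥ x) b ≠ 0) : ∃ c, M b c ≠ 0 ∧ x c ≠ 0 := by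
  by_contra hc
  push_neg at hc
  apply h
  rw [Matrix.mulVec, dotProduct]
  refine Finset.sum_eq_zero fun c _ => ?_
  by_cases h1 : M b c = 0
  · simp [h1]
  · simp [hc c h1]

lemma add_vecMulVec {N : ℕ} (x y w : Fin N → K) :
    vecMulVec (x + y) w = vecMulVec x w + vecMulVec y w := by
  ext b a
  simp [vecMulVec_apply, add_mul]

lemma neg_vecMulVec {N : ℕ} (x w : Fin N → K) :
    vecMulVec (-x) w = -vecMulVec x w := by
  ext b a
  simp [vecMulVec_apply]

lemma smul_vecMulVec {N : ℕ} (c : K) (x w : Fin N → K) :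
    vecMulVec x (c • w) = vecMulVec (c • x) w := by
  ext b a
  simp [vecMulVec_apply]
  ring

lemma vecMulVec_zero_left {N : ℕ} (w : Fin N → K) :
    vecMulVec (0 : Fin N → K) w = 0 := by
  ext b a; simp [vecMulVec_apply]

lemma vecMulVec_zero_right {N : ℕ} (x : Fin N → K) :
    vecMulVec x (0 : Fin N → K) = 0 := by
  ext b a; simp [vecMulVec_apply]

lemma e0_dot {N : ℕ} (k : Fin N) (x : Fin N → K) :
    (Pi.single k 1 : Fin N → K) ⬝ᵥ x = x k := by
  simp [dotProduct, Pi.single_apply, ite_mul]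

lemma neg_one_zpow_mul_self (z : ℤ) : ((-1 : K) ^ z) * ((-1 : K) ^ z) = 1 := by
  rw [← mul_zpow]
  norm_num

lemma neg_one_zpow_ne_zero (z : ℤ) : ((-1 : K) ^ z) ≠ 0 :=
  zpow_ne_zero z (neg_ne_zero.mpr one_ne_zero)
lemma normal_form_aux : ∀ (N : ℕ) (μ : Fin N → ℤ) (d : Matrix (Fin N) (Fin N) K),
    IsMorse μ d → ∃ ρ : Equiv.Perm (Fin N), IsGNR μ ρ ∧
      ∃ g : Matrix (Fin N) (Fin N) K, IsFilteredAut μ g ∧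
        d = g * canonDiff K μ ρ * g⁻¹ := by
  intro N
  induction N with
  | zero =>
    intro μ d _
    refine ⟨1, ⟨fun a => a.elim0, fun a => a.elim0⟩, 1,
      ⟨isUnit_one, fun b => b.elim0, fun b => b.elim0, fun b => b.elim0⟩, ?_⟩
    ext b a
    exact b.elim0
  | succ n ih =>
    intro μ d hd
    classical
    obtain ⟨hdμ, hdt, hdsq⟩ := hd
    -- row 0 of d vanishes
    have hrow0 : ∀ a, d 0 a = 0 := by
      intro a
      by_contra h
      have h1 := hdt 0 a h
      have h2 := hdμ 0 a h
      have h3 : a = 0 := le_antisymm h1 (Fin.zero_le a)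
      rw [h3] at h2
      omega
    -- the bulk matrix
    set μ' : Fin n → ℤ := fun a => μ a.succ with hμ'
    set d' : Matrix (Fin n) (Fin n) K := Matrix.of (fun b a => d b.succ a.succ) with hd'def
    have hd'morse : IsMorse μ' d' := by
      refine ⟨fun b a h => hdμ b.succ a.succ h, fun b a h =>
        Fin.succ_le_succ_iff.mp (hdt b.succ a.succ h), ?_⟩
      ext b a
      have h0 : (d * d) b.succ a.succ = 0 := by rw [hdsq]; rfl
      rw [Matrix.mul_apply, Fin.sum_univ_succ, hrow0 a.succ, mul_zero, zero_add] at h0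
      rw [Matrix.mul_apply, Matrix.zero_apply]
      exact h0
    obtain ⟨ρ', hρ', g', hg', hdg'⟩ := ih μ' d' hd'morse
    have hgdet : IsUnit g'.det := (Matrix.isUnit_iff_isUnit_det g').mp hg'.1
    set h' : Matrix (Fin n) (Fin n) K := g'⁻¹ with hh'def
    have hg'h' : g' * h' = 1 := Matrix.mul_nonsing_inv _ hgdet
    have hh'g' : h' * g' = 1 := Matrix.nonsing_inv_mul _ hgdet
    set c' : Matrix (Fin n) (Fin n) K := canonDiff K μ' ρ' with hc'def
    have hc'd' : h' * d' * g' = c' := by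
      rw [hdg']
      simp only [Matrix.mul_assoc]
      rw [hh'g', Matrix.mul_one, ← Matrix.mul_assoc, hh'g', Matrix.one_mul]
    -- the extended involution fixing 0
    set rhoh : Equiv.Perm (Fin (n+1)) := Equiv.Perm.decomposeFin.symm (0, ρ') with hrhoh
    have hrh0 : rhoh 0 = 0 := Equiv.Perm.decomposeFin_symm_apply_zero 0 ρ'
    have hrhsucc : ∀ a : Fin n, rhoh a.succ = (ρ' a).succ := by
      intro a
      rw [hrhoh, Equiv.Perm.decomposeFin_symm_apply_succ, Equiv.swap_self]
      rfl
    have hrhinv : ∀ x, rhoh (rhoh x) = x := by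
      refine Fin.cases ?_ (fun a => ?_)
      · rw [hrh0, hrh0]
      · rw [hrhsucc, hrhsucc, hρ'.1]
    have hrhgnr : IsGNR μ rhoh := by
      refine ⟨hrhinv, ?_⟩
      refine Fin.cases ?_ (fun a => ?_)
      · intro b h0 hlt
        rw [hrh0] at h0
        rw [← h0] at hlt
        exact absurd hlt (lt_irrefl _)
      · intro b h0 hlt
        rw [hrhsucc] at h0
        subst h0
        exact hρ'.2 a (ρ' a) rfl (Fin.succ_lt_succ_iff.mp hlt)
    set cc : Matrix (Fin (n+1)) (Fin (n+1)) K := canonDiff K μ rhoh with hccdef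
    have hcc : ext0 c' = cc := by
      ext b a
      refine Fin.cases ?_ (fun b' => ?_) b <;> refine Fin.cases ?_ (fun a' => ?_) a
      · rw [ext0_zero, hccdef]
        exact (canonDiff_col_fixed μ rhoh hrh0 0).symm
      · rw [ext0_zero, hccdef]
        unfold canonDiff
        split_ifs with h
        · exfalso
          have h1 := h.1
          rw [hrhsucc] at h1
          exact Fin.succ_ne_zero _ h1
        · rfl
      · rw [ext0_succ_zero, hccdef]
        exact (canonDiff_col_fixed μ rhoh hrh0 b'.succ).symm
      · rw [ext0_succ_succ, hccdef, hc'def]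
        unfold canonDiff
        simp only [hrhsucc, Fin.succ_inj, Fin.succ_lt_succ_iff]
        rfl
    -- rank-one decomposition of d
    set e0 : Fin (n+1) → K := Pi.single 0 1 with he0
    set w : Fin (n+1) → K := fun b => d b 0 with hwdef
    have hdecomp : d = ext0 d' + vecMulVec w e0 := by
      ext b a
      rw [Matrix.add_apply, vecMulVec_apply]
      refine Fin.cases ?_ (fun b' => ?_) b <;> refine Fin.cases ?_ (fun a' => ?_) a
      · rw [hrow0 0, ext0_zero, hwdef, he0]
        simp [hrow0 0]
      · rw [hrow0 a'.succ, ext0_zero, he0]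
        simp [Pi.single_apply, (Fin.succ_ne_zero a').symm]
      · rw [ext0_succ_zero, he0]
        simp [hwdef]
      · rw [ext0_succ_succ, he0]
        simp [Pi.single_apply, (Fin.succ_ne_zero a').symm, hd'def]
    set gh : Matrix (Fin (n+1)) (Fin (n+1)) K := ext1 g' with hghdef
    set hh : Matrix (Fin (n+1)) (Fin (n+1)) K := ext1 h' with hhhdef
    have hgh_hh : gh * hh = 1 := by
      rw [hghdef, hhhdef, ext1_mul_ext1, hg'h', ext1_one]
    have hhh_gh : hh * gh = 1 := by
      rw [hghdef, hhhdef, ext1_mul_ext1, hh'g', ext1_one]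
    set v : Fin (n+1) → K := hh *ᵥ w with hvdef
    have hv0 : v 0 = 0 := by
      rw [hvdef, hhhdef, Matrix.mulVec, dotProduct, Fin.sum_univ_succ]
      rw [ext1_zero_zero]
      simp only [ext1_zero_succ, zero_mul, Finset.sum_const_zero, add_zero, one_mul]
      exact hrow0 0
    have hd2 : hh * d * gh = cc + vecMulVec v e0 := by
      rw [hdecomp, Matrix.mul_add, Matrix.add_mul]
      congr 1
      · rw [hhhdef, hghdef, ext1_mul_ext0, ext0_mul_ext1, ← hcc, hc'd']
      · rw [mul_vecMulVec, vecMulVec_mul, hghdef, he0,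
          single_vecMul_ext1, ← he0, ← hvdef]
    set D2 : Matrix (Fin (n+1)) (Fin (n+1)) K := cc + vecMulVec v e0 with hD2def
    have hback : gh * D2 * hh = d := by
      rw [← hd2]
      simp only [Matrix.mul_assoc]
      rw [← Matrix.mul_assoc gh hh, hgh_hh, Matrix.one_mul, Matrix.mul_one]
    -- grading of v
    have hvgrade : ∀ b, v b ≠ 0 → μ b = μ 0 - 1 := by
      intro b hb
      rw [hvdef] at hb
      obtain ⟨c, h1, h2⟩ := exists_mulVec_ne_zero hb
      have hμc : μ b = μ c := by
        rw [hhhdef] at h1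
        revert h1
        refine Fin.cases ?_ (fun b' => ?_) b <;> refine Fin.cases ?_ (fun c' => ?_) c <;>
          intro h1
        · rfl
        · simp at h1
        · simp at h1
        · exact inv_graded hg'.1 hg'.2.1 b' c' (by simpa using h1)
      rw [hμc]
      exact hdμ c 0 h2
    -- e0-row and dot facts
    have hrow0cc : (e0 ᵥ* cc) = 0 := by
      funext a
      rw [he0, Matrix.single_vecMul]
      simp only [one_smul, Matrix.row]
      rw [hccdef]
      exact canonDiff_row_fixed μ rhoh hrhinv hrh0 a
    have hccsq : cc * cc = 0 := by
      rw [hccdef]; exact canonDiff_sq μ rhoh hrhinv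
    -- D2 squared is zero, hence c v = 0
    have hD2sq : D2 * D2 = 0 := by
      rw [← hd2]
      simp only [Matrix.mul_assoc]
      rw [← Matrix.mul_assoc gh hh, hgh_hh, Matrix.one_mul,
        ← Matrix.mul_assoc d d, hdsq, Matrix.zero_mul, Matrix.mul_zero]
    have he0dotv : e0 ⬝ᵥ v = 0 := by rw [he0, e0_dot]; exact hv0
    have hexp : D2 * D2 = vecMulVec (cc *ᵥ v) e0 := by
      rw [hD2def, Matrix.mul_add, Matrix.add_mul, Matrix.add_mul, hccsq,
        mul_vecMulVec, vecMulVec_mul, hrow0cc, vecMulVec_zero_right,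
        vecMulVec_mul_vecMulVec, he0dotv, zero_smul]
      simp
    have hcv : cc *ᵥ v = 0 := by
      funext b
      have h1 : vecMulVec (cc *ᵥ v) e0 b 0 = 0 := by rw [← hexp, hD2sq]; rfl
      rw [vecMulVec_apply, he0, Pi.single_eq_same, mul_one] at h1
      exact h1
    -- v vanishes on births
    have hbirth : ∀ a : Fin (n+1), a < rhoh a → v a = 0 := by
      intro a ha
      have h1 := congrFun hcv (rhoh a)
      rw [canonDiff_mulVec μ rhoh hrhinv, if_pos (by rw [hrhinv]; exact ha), hrhinv] at h1
      rcases mul_eq_zero.mp h1 with h | h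
      · exact absurd h (neg_one_zpow_ne_zero _)
      · exact h
    -- split v into fixed part and death part
    set v' : Fin (n+1) → K := fun b => if rhoh b = b then v b else 0 with hv'def
    set vd : Fin (n+1) → K := fun b => if rhoh b < b then v b else 0 with hvddef
    have hvsplit : v = v' + vd := by
      funext b
      rw [hv'def, hvddef, Pi.add_apply]
      rcases lt_trichotomy (rhoh b) b with h | h | h
      · rw [if_neg (ne_of_lt h), if_pos h, zero_add]
      · rw [if_pos h, if_neg (by rw [h]; exact lt_irrefl b), add_zero]
      · rw [if_neg (ne_of_gt h), if_neg (not_lt.mpr (le_of_lt h)), hbirth b h, add_zero]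
    have hv'0 : v' 0 = 0 := by
      rw [hv'def]
      simp only [hrh0, if_pos rfl]
      exact hv0
    -- the correction vector killing the death part
    set u : Fin (n+1) → K := fun b => if b < rhoh b then (-1 : K) ^ (μ b) * v (rhoh b) else 0
      with hudef
    have hu0 : u 0 = 0 := by
      rw [hudef]
      simp only [hrh0]
      rw [if_neg (lt_irrefl 0)]
    have hcu : cc *ᵥ u = vd := by
      funext b
      rw [hccdef, canonDiff_mulVec μ rhoh hrhinv]
      simp only [hudef, hvddef]
      by_cases h : rhoh b < b
      · rw [if_pos h, if_pos h]
        have hlt : rhoh b < rhoh (rhoh b) := by rw [hrhinv]; exact h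
        rw [if_pos hlt, hrhinv, ← mul_assoc, neg_one_zpow_mul_self, one_mul]
      · rw [if_neg h, if_neg h]
    set G1 : Matrix (Fin (n+1)) (Fin (n+1)) K := 1 - vecMulVec u e0 with hG1def
    set G1i : Matrix (Fin (n+1)) (Fin (n+1)) K := 1 + vecMulVec u e0 with hG1idef
    have hG1mul : G1 * G1i = 1 := by
      rw [hG1def, hG1idef, he0]; exact elem_mul_elem' u 0 hu0
    have hG1mul' : G1i * G1 = 1 := by
      rw [hG1def, hG1idef, he0]; exact elem_mul_elem u 0 hu0
    have hG1fil : IsFilteredAut μ G1 := by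
      have h1 : G1 = 1 + vecMulVec (-u) e0 := by rw [hG1def, neg_vecMulVec]; abel
      rw [h1, he0]
      refine elem_filtered μ (-u) 0 (by rw [Pi.neg_apply, hu0, neg_zero]) ?_ ?_
      · intro b hb
        rw [Pi.neg_apply, neg_ne_zero] at hb
        simp only [hudef] at hb
        by_cases h : b < rhoh b
        · rw [if_pos h] at hb
          have h2 : v (rhoh b) ≠ 0 := fun h0 => hb (by rw [h0, mul_zero])
          have h3 := hvgrade (rhoh b) h2
          have h4 := hrhgnr.2 b (rhoh b) rfl h
          omega
        · rw [if_neg h] at hb; exact absurd rfl hb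
      · intro b _; exact Fin.zero_le b
    set D3 : Matrix (Fin (n+1)) (Fin (n+1)) K := cc + vecMulVec v' e0 with hD3def
    have hUc : vecMulVec u e0 * cc = 0 := by
      rw [vecMulVec_mul, hrow0cc, vecMulVec_zero_right]
    have hUV' : vecMulVec u e0 * vecMulVec v' e0 = 0 := by
      rw [vecMulVec_mul_vecMulVec, he0, e0_dot, hv'0, zero_smul]
    have hV'U : vecMulVec v' e0 * vecMulVec u e0 = 0 := by
      rw [vecMulVec_mul_vecMulVec, he0, e0_dot, hu0, zero_smul]
    have hUD3 : vecMulVec u e0 * D3 = 0 := by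
      rw [hD3def, Matrix.mul_add, hUc, hUV', add_zero]
    have hD3U : D3 * vecMulVec u e0 = vecMulVec vd e0 := by
      rw [hD3def, Matrix.add_mul, mul_vecMulVec, hcu, hV'U, add_zero]
    have hG1conj : G1 * D3 * G1i = D2 := by
      calc G1 * D3 * G1i = (D3 - vecMulVec u e0 * D3) * G1i := by
            rw [hG1def, Matrix.sub_mul, Matrix.one_mul]
        _ = D3 * G1i := by rw [hUD3, sub_zero]
        _ = D3 + vecMulVec vd e0 := by rw [hG1idef, Matrix.mul_add, Matrix.mul_one, hD3U]
        _ = D2 := by rw [hD3def, hD2def, add_assoc, ← add_vecMulVec, ← hvsplit]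
    by_cases hv'zero : v' = 0
    · -- Case A : no new pair, 0 is unpaired
      have hD3cc : D3 = cc := by rw [hD3def, hv'zero, vecMulVec_zero_left, add_zero]
      refine ⟨rhoh, hrhgnr, gh * G1, (ext1_filtered μ g' hg').mul hG1fil, ?_⟩
      have hggi : (gh * G1) * (G1i * hh) = 1 := by
        simp only [Matrix.mul_assoc]
        rw [← Matrix.mul_assoc G1 G1i, hG1mul, Matrix.one_mul, hgh_hh]
      rw [Matrix.inv_eq_right_inv hggi, ← hback, ← hG1conj, hD3cc]
      simp only [Matrix.mul_assoc]
      rfl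
    · -- Case B : 0 gets paired with the minimal fixed point in the support of v'
      have hex : ∃ b, v' b ≠ 0 := Function.ne_iff.mp hv'zero
      have hSne : (Finset.univ.filter (fun b => v' b ≠ 0)).Nonempty := by
        obtain ⟨b, hb⟩ := hex
        exact ⟨b, by simp [hb]⟩
      set m : Fin (n+1) := (Finset.univ.filter (fun b => v' b ≠ 0)).min' hSne with hmdef
      have hmS : v' m ≠ 0 := by
        have h1 := Finset.min'_mem _ hSne
        rw [← hmdef] at h1
        simpa using h1
      have hmin : ∀ b, v' b ≠ 0 → m ≤ b := fun b hb =>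
        Finset.min'_le _ b (by simp [hb])
      have hfixm : rhoh m = m := by
        by_contra h
        apply hmS
        simp only [hv'def]
        rw [if_neg h]
      have hv'm_eq : v' m = v m := by simp only [hv'def]; rw [if_pos hfixm]
      have hvm : v m ≠ 0 := by rwa [hv'm_eq] at hmS
      have hm0 : m ≠ 0 := by
        intro h
        apply hmS
        rw [h]
        exact hv'0
      have hmμ : μ m = μ 0 - 1 := hvgrade m hvm
      have hv'fix : ∀ b, v' b ≠ 0 → rhoh b = b := by
        intro b hb
        by_contra h
        apply hb
        simp only [hv'def]
        rw [if_neg h]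
      have hv'grade : ∀ b, v' b ≠ 0 → μ b = μ 0 - 1 := by
        intro b hb
        have h2 : v' b = v b := by simp only [hv'def]; rw [if_pos (hv'fix b hb)]
        rw [h2] at hb
        exact hvgrade b hb
      set em : Fin (n+1) → K := Pi.single m 1 with hem
      set w2 : Fin (n+1) → K := fun b => if b = m then 0 else v' b / v' m with hw2def
      have hw2m : w2 m = 0 := by simp [hw2def]
      have hw2ne : ∀ b, w2 b ≠ 0 → v' b ≠ 0 ∧ b ≠ m := by
        intro b hb
        simp only [hw2def] at hb
        by_cases h : b = m
        · rw [if_pos h] at hb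
          exact absurd rfl hb
        · rw [if_neg h] at hb
          exact ⟨fun h0 => hb (by rw [h0, zero_div]), h⟩
      have hw20 : w2 0 = 0 := by
        by_contra h
        exact (hw2ne 0 h).1 hv'0
      have hw2fix : ∀ b, w2 b ≠ 0 → rhoh b = b := fun b hb => hv'fix b (hw2ne b hb).1
      set W : Matrix (Fin (n+1)) (Fin (n+1)) K := vecMulVec w2 em with hWdef
      set G2 : Matrix (Fin (n+1)) (Fin (n+1)) K := 1 + W with hG2def
      set G2i : Matrix (Fin (n+1)) (Fin (n+1)) K := 1 - W with hG2idef
      have hG2mul : G2 * G2i = 1 := by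
        rw [hG2def, hG2idef, hWdef, hem]
        exact elem_mul_elem w2 m hw2m
      have hG2mul' : G2i * G2 = 1 := by
        rw [hG2def, hG2idef, hWdef, hem]
        exact elem_mul_elem' w2 m hw2m
      have hG2fil : IsFilteredAut μ G2 := by
        rw [hG2def, hWdef, hem]
        refine elem_filtered μ w2 m hw2m ?_ ?_
        · intro b hb
          rw [hv'grade b (hw2ne b hb).1, hmμ]
        · intro b hb
          exact hmin b (hw2ne b hb).1
      set vf : Fin (n+1) → K := Pi.single m (v' m) with hvf
      set D4 : Matrix (Fin (n+1)) (Fin (n+1)) K := cc + vecMulVec vf e0 with hD4def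
      have hrowmcc : ∀ a, cc m a = 0 := fun a => by
        rw [hccdef]; exact canonDiff_row_fixed μ rhoh hrhinv hfixm a
      have hcw2 : cc *ᵥ w2 = 0 := by
        funext b
        rw [hccdef, canonDiff_mulVec μ rhoh hrhinv]
        by_cases h : rhoh b < b
        · rw [if_pos h]
          have h1 : w2 (rhoh b) = 0 := by
            by_contra h2
            have h3 := hw2fix (rhoh b) h2
            rw [hrhinv] at h3
            exact ne_of_lt h h3.symm
          rw [h1, mul_zero]
          rfl
        · rw [if_neg h]
          rfl
      have hemD4 : em ᵥ* D4 = v' m • e0 := by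
        funext a
        rw [hem, Matrix.single_vecMul]
        simp only [one_smul, Matrix.row]
        rw [hD4def, Matrix.add_apply, vecMulVec_apply, hrowmcc a, zero_add, hvf,
          Pi.single_eq_same, Pi.smul_apply, smul_eq_mul]
      have hsmw2 : v' m • w2 = v' - vf := by
        funext b
        simp only [hw2def, hvf, Pi.smul_apply, Pi.sub_apply, smul_eq_mul, Pi.single_apply]
        by_cases h : b = m
        · subst h
          rw [if_pos rfl, if_pos rfl, mul_zero, sub_self]
        · rw [if_neg h, if_neg h, sub_zero, mul_comm, div_mul_cancel₀ _ hmS]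
      have hWD4 : W * D4 = vecMulVec (v' - vf) e0 := by
        rw [hWdef, vecMulVec_mul, hemD4, smul_vecMulVec, hsmw2]
      have hccW : cc * W = 0 := by
        rw [hWdef, mul_vecMulVec, hcw2, vecMulVec_zero_left]
      have hvfW : vecMulVec vf e0 * W = 0 := by
        rw [hWdef, vecMulVec_mul_vecMulVec, he0, e0_dot, hw20, zero_smul]
      have hD4W : D4 * W = 0 := by
        rw [hD4def, Matrix.add_mul, hccW, hvfW, add_zero]
      have hWD4W : W * D4 * W = 0 := by rw [Matrix.mul_assoc, hD4W, Matrix.mul_zero]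
      have hvfsum : vf + (v' - vf) = v' := by abel
      have hG2conj : G2 * D4 * G2i = D3 := by
        calc G2 * D4 * G2i = (D4 + W * D4) * G2i := by
              rw [hG2def, Matrix.add_mul, Matrix.one_mul]
          _ = D4 + W * D4 - (D4 * W + W * D4 * W) := by
              rw [hG2idef, Matrix.mul_sub, Matrix.mul_one, Matrix.add_mul]
          _ = D4 + vecMulVec (v' - vf) e0 := by
              rw [hD4W, hWD4W, hWD4, add_zero, sub_zero]
          _ = D3 := by
              rw [hD4def, hD3def, add_assoc, ← add_vecMulVec, hvfsum]
      -- the final permutation pairing 0 with m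
      set m' : Fin n := m.pred hm0 with hm'def
      have hm'succ : m'.succ = m := Fin.succ_pred m hm0
      have hρ'm' : ρ' m' = m' := by
        have h1 : rhoh m'.succ = m'.succ := by rw [hm'succ]; exact hfixm
        rw [hrhsucc] at h1
        exact Fin.succ_inj.mp h1
      set ρ : Equiv.Perm (Fin (n+1)) := Equiv.Perm.decomposeFin.symm (m, ρ') with hρdef
      have hρ0 : ρ 0 = m := Equiv.Perm.decomposeFin_symm_apply_zero m ρ'
      have hρm : ρ m = 0 := by
        rw [← hm'succ, hρdef, Equiv.Perm.decomposeFin_symm_apply_succ, hρ'm', hm'succ,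
          Equiv.swap_apply_right]
      have hρsucc : ∀ a : Fin n, a ≠ m' → ρ a.succ = (ρ' a).succ := by
        intro a ha
        rw [hρdef, Equiv.Perm.decomposeFin_symm_apply_succ]
        refine Equiv.swap_apply_of_ne_of_ne (Fin.succ_ne_zero _) ?_
        rw [← hm'succ, Ne, Fin.succ_inj]
        intro h
        apply ha
        have h2 := congrArg ρ' h
        rw [hρ'.1 a, hρ'm'] at h2
        exact h2
      have hρinv : ∀ x, ρ (ρ x) = x := by
        refine Fin.cases ?_ (fun a => ?_)
        · rw [hρ0, hρm]
        · by_cases ha : a = m'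
          · subst ha
            rw [hm'succ, hρm, hρ0]
          · rw [hρsucc a ha]
            have hne : ρ' a ≠ m' := fun h => ha (by
              have h2 := congrArg ρ' h
              rw [hρ'.1 a, hρ'm'] at h2
              exact h2)
            rw [hρsucc (ρ' a) hne, hρ'.1]
      have hρgnr : IsGNR μ ρ := by
        refine ⟨hρinv, ?_⟩
        refine Fin.cases ?_ (fun a => ?_)
        · intro b h0 _
          rw [hρ0] at h0
          subst h0
          exact hmμ
        · intro b h0 hlt
          by_cases ha : a = m'
          · subst ha
            rw [hm'succ, hρm] at h0
            subst h0
            exact absurd hlt (Fin.not_lt_zero _)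
          · rw [hρsucc a ha] at h0
            subst h0
            exact hρ'.2 a (ρ' a) rfl (Fin.succ_lt_succ_iff.mp hlt)
      -- identification of the canonical differential
      have hcρ : canonDiff K μ ρ = cc + vecMulVec (Pi.single m ((-1:K)^(μ 0))) e0 := by
        ext b a
        rw [Matrix.add_apply, vecMulVec_apply]
        refine Fin.cases ?_ (fun a' => ?_) a
        · rw [hccdef, canonDiff_col_fixed μ rhoh hrh0 b, zero_add, he0, Pi.single_eq_same,
            mul_one, Pi.single_apply]
          unfold canonDiff
          rw [hρ0]
          by_cases h : b = m
          · subst h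
            rw [if_pos ⟨rfl, Fin.pos_of_ne_zero hm0⟩, if_pos rfl]
          · rw [if_neg (fun hc => h hc.1.symm), if_neg h]
        · have he0s : e0 a'.succ = 0 := by
            rw [he0, Pi.single_apply, if_neg (Fin.succ_ne_zero a')]
          rw [he0s, mul_zero, add_zero]
          by_cases ha : a' = m'
          · subst ha
            rw [hm'succ, hccdef, canonDiff_col_fixed μ rhoh hfixm b]
            unfold canonDiff
            rw [if_neg]
            rintro ⟨h1, h2⟩
            rw [hρm] at h1
            subst h1
            exact absurd h2 (Fin.not_lt_zero _)
          · rw [hccdef]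
            unfold canonDiff
            rw [hρsucc a' ha, ← hrhsucc]
      -- scaling matrix
      set t : K := (-1:K)^(μ 0) / v' m with htdef
      have ht : t ≠ 0 := div_ne_zero (neg_one_zpow_ne_zero _) hmS
      set δ : Fin (n+1) → K := fun b => if b = 0 then t else 1 with hδdef
      have hδ : ∀ b, δ b ≠ 0 := by
        intro b
        simp only [hδdef]
        by_cases h : b = 0
        · rw [if_pos h]; exact ht
        · rw [if_neg h]; exact one_ne_zero
      set Dm : Matrix (Fin (n+1)) (Fin (n+1)) K := Matrix.diagonal δ with hDmdef
      set Dmi : Matrix (Fin (n+1)) (Fin (n+1)) K := Matrix.diagonal (fun b => (δ b)⁻¹)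
        with hDmidef
      have hDmmul : Dm * Dmi = 1 := by
        rw [hDmdef, hDmidef, Matrix.diagonal_mul_diagonal]
        have h2 : (fun i => δ i * (δ i)⁻¹) = fun _ => (1:K) :=
          funext fun b => mul_inv_cancel₀ (hδ b)
        rw [h2, Matrix.diagonal_one]
      have hDmmul' : Dmi * Dm = 1 := by
        rw [hDmdef, hDmidef, Matrix.diagonal_mul_diagonal]
        have h2 : (fun i => (δ i)⁻¹ * δ i) = fun _ => (1:K) :=
          funext fun b => inv_mul_cancel₀ (hδ b)
        rw [h2, Matrix.diagonal_one]
      have hDmfil : IsFilteredAut μ Dm := by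
        rw [hDmdef]; exact diagonal_filtered μ δ hδ
      have hscale : Dm * canonDiff K μ ρ * Dmi = D4 := by
        ext b a
        rw [Matrix.mul_assoc, hDmdef, hDmidef, Matrix.diagonal_mul, Matrix.mul_diagonal,
          hcρ, hD4def]
        simp only [Matrix.add_apply, vecMulVec_apply]
        refine Fin.cases ?_ (fun a' => ?_) a
        · rw [hccdef, canonDiff_col_fixed μ rhoh hrh0 b, zero_add, zero_add, he0,
            Pi.single_eq_same, mul_one, mul_one, Pi.single_apply, hvf, Pi.single_apply]
          by_cases h : b = m
          · subst h
            rw [if_pos rfl, if_pos rfl]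
            simp only [hδdef]
            rw [if_neg hm0, if_true, one_mul, htdef, inv_div, mul_comm]
            exact div_mul_cancel₀ _ (neg_one_zpow_ne_zero _)
          · rw [if_neg h, if_neg h, zero_mul, mul_zero]
        · have he0s : e0 a'.succ = 0 := by
            rw [he0, Pi.single_apply, if_neg (Fin.succ_ne_zero a')]
          rw [he0s, mul_zero, add_zero, mul_zero, add_zero]
          simp only [hδdef]
          rw [if_neg (Fin.succ_ne_zero a'), inv_one, mul_one]
          by_cases hb : b = 0
          · subst hb
            rw [hccdef, canonDiff_row_fixed μ rhoh hrhinv hrh0, mul_zero]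
          · rw [if_neg hb, one_mul]
      -- assemble everything
      have hfinal : gh * G1 * G2 * Dm * canonDiff K μ ρ * (Dmi * G2i * (G1i * hh)) = d := by
        rw [← hback, ← hG1conj, ← hG2conj, ← hscale]
        simp only [Matrix.mul_assoc]
      have hgi : (gh * G1 * G2 * Dm) * (Dmi * G2i * (G1i * hh)) = 1 := by
        simp only [Matrix.mul_assoc]
        rw [← Matrix.mul_assoc Dm Dmi, hDmmul, Matrix.one_mul,
          ← Matrix.mul_assoc G2 G2i, hG2mul, Matrix.one_mul,
          ← Matrix.mul_assoc G1 G1i, hG1mul, Matrix.one_mul, hgh_hh]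
      refine ⟨ρ, hρgnr, gh * G1 * G2 * Dm,
        (((ext1_filtered μ g' hg').mul hG1fil).mul hG2fil).mul hDmfil, ?_⟩
      rw [Matrix.inv_eq_right_inv hgi]
      rw [← hfinal]

/-- **Normal form for Morse complexes** (existence part of the orbit decomposition):
every Morse complex `d ∈ MC(C;K)` is of the form `g ∘ d_ρ ∘ g⁻¹` for some involution
`ρ ∈ GNR(C)` and some filtered automorphism `g ∈ B(C;K)`. -/
theorem morse_normal_form (hn : 1 ≤ n) (μ : Fin n → ℤ)
    (d : Matrix (Fin n) (Fin n) K) (hd : IsMorse μ d) :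
    ∃ ρ : Equiv.Perm (Fin n), IsGNR μ ρ ∧
      ∃ g : Matrix (Fin n) (Fin n) K, IsFilteredAut μ g ∧
        d = g * canonDiff K μ ρ * g⁻¹ := by
  exact normal_form_aux n μ d hd

end AugSheaf
end

section
/- Disjointness of the orbit decomposition of Morse complexes: if ρ, ρ' ∈ GNR(C) and g, g' ∈ B(C;K) satisfy g ∘ d_ρ ∘ g^{−1} = g' ∘ d_{ρ'} ∘ g'^{−1}, then ρ = ρ'. Hence the conjugation orbits B(C;K)·d_ρ for distinct ρ ∈ GNR(C) are pairwise disjoint, and MC(C;K) = ⨆_{ρ ∈ GNR(C)} B(C;K)·d_ρ is a partition into finitely many orbits. -/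
/-!
Setup: `K` a field, `n ≥ 1`, `μ : Fin n → ℤ` a Maslov potential.  `C = ⊕ₐ K·eₐ` is the
graded vector space with `deg eₐ = -μ a` and decreasing filtration `Fⁱ C = span {eₐ : i ≤ a}`
(indices shifted to be `0`-based).  Linear maps `C → C` are encoded as matrices, where
`d b a` is the coefficient of `e b` in `d (e a)`.
-/

namespace AugSheaf

variable {K : Type*} [Field K] {n : ℕ}

/-- Row projector onto rows `b < j`. -/
def rowP (K : Type*) [Field K] (n : ℕ) (j : ℕ) : Matrix (Fin n) (Fin n) K :=
  Matrix.diagonal (fun b => if (b : ℕ) < j then 1 else 0)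

/-- Column projector onto columns `a ≥ i`. -/
def colP (K : Type*) [Field K] (n : ℕ) (i : ℕ) : Matrix (Fin n) (Fin n) K :=
  Matrix.diagonal (fun a => if i ≤ (a : ℕ) then 1 else 0)

lemma rowP_absorb (j : ℕ) (g : Matrix (Fin n) (Fin n) K)
    (hg : ∀ b a : Fin n, g b a ≠ 0 → a ≤ b) :
    rowP K n j * g * rowP K n j = rowP K n j * g := by
  ext b a
  simp only [rowP, Matrix.mul_diagonal, Matrix.diagonal_mul]
  by_cases hb : (b : ℕ) < j
  · by_cases ha : (a : ℕ) < j
    · simp [ha, hb]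
    · rcases eq_or_ne (g b a) 0 with h | h
      · simp [h]
      · exact absurd (lt_of_le_of_lt (Fin.le_def.mp (hg b a h)) hb) ha
  · simp [hb]

lemma colP_absorb (i : ℕ) (g : Matrix (Fin n) (Fin n) K)
    (hg : ∀ b a : Fin n, g b a ≠ 0 → a ≤ b) :
    colP K n i * g * colP K n i = g * colP K n i := by
  ext b a
  simp only [colP, Matrix.mul_diagonal, Matrix.diagonal_mul]
  by_cases ha : i ≤ (a : ℕ)
  · by_cases hb : i ≤ (b : ℕ)
    · simp [ha, hb]
    · rcases eq_or_ne (g b a) 0 with h | h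
      · simp [h]
      · exact absurd (le_trans ha (Fin.le_def.mp (hg b a h))) hb
  · simp [ha]

lemma rank_corner_le (d g : Matrix (Fin n) (Fin n) K)
    (hgl : ∀ b a : Fin n, g b a ≠ 0 → a ≤ b)
    (hgil : ∀ b a : Fin n, g⁻¹ b a ≠ 0 → a ≤ b) (i j : ℕ) :
    (rowP K n j * (g * d * g⁻¹) * colP K n i).rank ≤
      (rowP K n j * d * colP K n i).rank := by
  have h1 := rowP_absorb j g hgl
  have h2 : colP K n i * (g⁻¹ * colP K n i) = g⁻¹ * colP K n i := by
    rw [← Matrix.mul_assoc]; exact colP_absorb i g⁻¹ hgil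
  have key : rowP K n j * (g * d * g⁻¹) * colP K n i
      = (rowP K n j * g) * (rowP K n j * d * colP K n i) * (g⁻¹ * colP K n i) := by
    calc rowP K n j * (g * d * g⁻¹) * colP K n i
        = (rowP K n j * g) * d * (g⁻¹ * colP K n i) := by
          simp only [Matrix.mul_assoc]
      _ = (rowP K n j * g * rowP K n j) * d * (colP K n i * (g⁻¹ * colP K n i)) := by
          rw [h1, h2]
      _ = (rowP K n j * g) * (rowP K n j * d * colP K n i) * (g⁻¹ * colP K n i) := by
          simp only [Matrix.mul_assoc]
  rw [key]
  exact le_trans (Matrix.rank_mul_le_left _ _) (Matrix.rank_mul_le_right _ _)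

lemma rank_corner_canon (μ : Fin n → ℤ) (ρ : Equiv.Perm (Fin n)) (i j : ℕ) :
    (rowP K n j * canonDiff K μ ρ * colP K n i).rank
      = (Finset.univ.filter
          (fun a : Fin n => i ≤ (a : ℕ) ∧ a < ρ a ∧ (ρ a : ℕ) < j)).card := by
  classical
  have hM : rowP K n j * canonDiff K μ ρ * colP K n i
      = (Matrix.diagonal (fun a : Fin n =>
          if i ≤ (a : ℕ) ∧ a < ρ a ∧ (ρ a : ℕ) < j then (-1 : K) ^ (μ a) else 0)).submatrix
            ρ.symm (Equiv.refl (Fin n)) := by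
    ext b a
    simp only [rowP, colP, Matrix.mul_diagonal, Matrix.diagonal_mul, Matrix.submatrix_apply,
      Matrix.diagonal_apply, canonDiff, Equiv.refl_apply]
    by_cases hba : ρ.symm b = a
    · have hb : ρ a = b := by rw [← hba]; simp
      subst hb
      rw [if_pos hba]
      by_cases h1 : i ≤ (a : ℕ) <;> by_cases h2 : a < ρ a <;>
        by_cases h3 : ((ρ a : ℕ)) < j <;> simp [h1, h2, h3]
    · have hb : ρ a ≠ b := fun h => hba (by rw [← h]; simp)
      simp [hba, hb]
  rw [hM, Matrix.rank_submatrix, Matrix.rank_diagonal, Fintype.card_subtype]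
  congr 1
  apply Finset.filter_congr
  intro a _
  have hne : ((-1 : K) ^ (μ a)) ≠ 0 := zpow_ne_zero _ (neg_ne_zero.mpr one_ne_zero)
  by_cases hc : i ≤ (a : ℕ) ∧ a < ρ a ∧ (ρ a : ℕ) < j <;> simp [hc, hne]

lemma count_split (σ : Equiv.Perm (Fin n)) (a0 : Fin n) (j : ℕ) :
    (Finset.univ.filter
        (fun a : Fin n => (a0 : ℕ) ≤ (a : ℕ) ∧ a < σ a ∧ (σ a : ℕ) < j)).card
      = (Finset.univ.filter
          (fun a : Fin n => (a0 : ℕ) + 1 ≤ (a : ℕ) ∧ a < σ a ∧ (σ a : ℕ) < j)).card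
        + (if a0 < σ a0 ∧ (σ a0 : ℕ) < j then 1 else 0) := by
  classical
  have hiff : ∀ a : Fin n, ((a0 : ℕ) ≤ (a : ℕ) ∧ a < σ a ∧ (σ a : ℕ) < j) ↔
      (((a0 : ℕ) + 1 ≤ (a : ℕ) ∧ a < σ a ∧ (σ a : ℕ) < j) ∨
        (a = a0 ∧ a0 < σ a0 ∧ (σ a0 : ℕ) < j)) := by
    intro a
    constructor
    · rintro ⟨h1, h2, h3⟩
      rcases eq_or_lt_of_le h1 with h | h
      · have : a = a0 := Fin.ext h.symm
        subst this
        exact Or.inr ⟨rfl, h2, h3⟩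
      · exact Or.inl ⟨h, h2, h3⟩
    · rintro (⟨h1, h2, h3⟩ | ⟨rfl, h2, h3⟩)
      · exact ⟨Nat.le_of_succ_le h1, h2, h3⟩
      · exact ⟨le_refl _, h2, h3⟩
  rw [Finset.filter_congr (fun a _ => hiff a), Finset.filter_or,
    Finset.card_union_of_disjoint]
  · congr 1
    by_cases hC : a0 < σ a0 ∧ (σ a0 : ℕ) < j
    · simp [hC, Finset.filter_eq']
    · simp [hC]
  · rw [Finset.disjoint_left]
    intro a ha hb
    rw [Finset.mem_filter] at ha hb
    obtain ⟨-, h1, -⟩ := ha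
    obtain ⟨-, rfl, -⟩ := hb
    exact absurd h1 (by omega)

/-- **Disjointness of the orbit decomposition of Morse complexes**: if `ρ, ρ' ∈ GNR(C)`
and `g, g' ∈ B(C;K)` satisfy `g ∘ d_ρ ∘ g⁻¹ = g' ∘ d_ρ' ∘ g'⁻¹`, then `ρ = ρ'`.  Hence the
conjugation orbits `B(C;K)·d_ρ` for distinct `ρ ∈ GNR(C)` are pairwise disjoint. -/
theorem morse_orbits_disjoint (hn : 1 ≤ n) (μ : Fin n → ℤ)
    (ρ ρ' : Equiv.Perm (Fin n)) (hρ : IsGNR μ ρ) (hρ' : IsGNR μ ρ')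
    (g g' : Matrix (Fin n) (Fin n) K)
    (hg : IsFilteredAut μ g) (hg' : IsFilteredAut μ g')
    (heq : g * canonDiff K μ ρ * g⁻¹ = g' * canonDiff K μ ρ' * g'⁻¹) :
    ρ = ρ' := by
  classical
  obtain ⟨hgu, -, hgl, hgil⟩ := hg
  obtain ⟨hgu', -, hgl', hgil'⟩ := hg'
  have hdet : IsUnit g.det := (Matrix.isUnit_iff_isUnit_det g).mp hgu
  have hdet' : IsUnit g'.det := (Matrix.isUnit_iff_isUnit_det g').mp hgu'
  have conj_eq : ∀ (i j : ℕ) (d gg : Matrix (Fin n) (Fin n) K), IsUnit gg.det →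
      (∀ b a : Fin n, gg b a ≠ 0 → a ≤ b) → (∀ b a : Fin n, gg⁻¹ b a ≠ 0 → a ≤ b) →
      (rowP K n j * (gg * d * gg⁻¹) * colP K n i).rank
        = (rowP K n j * d * colP K n i).rank := by
    intro i j d gg hd hl hil
    refine le_antisymm (rank_corner_le d gg hl hil i j) ?_
    have hdd : d = gg⁻¹ * (gg * d * gg⁻¹) * gg⁻¹⁻¹ := by
      rw [Matrix.nonsing_inv_nonsing_inv gg hd]
      calc d = (gg⁻¹ * gg) * d * (gg⁻¹ * gg) := by
              rw [Matrix.nonsing_inv_mul gg hd]; simp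
        _ = gg⁻¹ * (gg * d * gg⁻¹) * gg := by simp only [Matrix.mul_assoc]
    conv_lhs => rw [hdd]
    exact rank_corner_le (gg * d * gg⁻¹) gg⁻¹ hil
      (by rw [Matrix.nonsing_inv_nonsing_inv gg hd]; exact hl) i j
  have hcount : ∀ i j : ℕ,
      (Finset.univ.filter
          (fun a : Fin n => i ≤ (a : ℕ) ∧ a < ρ a ∧ (ρ a : ℕ) < j)).card =
      (Finset.univ.filter
          (fun a : Fin n => i ≤ (a : ℕ) ∧ a < ρ' a ∧ (ρ' a : ℕ) < j)).card := by
    intro i j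
    rw [← rank_corner_canon (K := K) μ ρ i j, ← rank_corner_canon (K := K) μ ρ' i j,
      ← conj_eq i j (canonDiff K μ ρ) g hdet hgl hgil,
      ← conj_eq i j (canonDiff K μ ρ') g' hdet' hgl' hgil', heq]
  have hind : ∀ (a0 : Fin n) (j : ℕ),
      ((a0 < ρ a0 ∧ (ρ a0 : ℕ) < j) ↔ (a0 < ρ' a0 ∧ (ρ' a0 : ℕ) < j)) := by
    intro a0 j
    have h1 := count_split ρ a0 j
    have h2 := count_split ρ' a0 j
    have e1 := hcount (a0 : ℕ) j
    have e2 := hcount ((a0 : ℕ) + 1) j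
    rw [h1, h2, e2] at e1
    have hi := Nat.add_left_cancel e1
    by_cases hA : a0 < ρ a0 ∧ (ρ a0 : ℕ) < j <;>
      by_cases hB : a0 < ρ' a0 ∧ (ρ' a0 : ℕ) < j <;> simp [hA, hB] at hi ⊢
  have hlt : ∀ a : Fin n, a < ρ a ↔ a < ρ' a := by
    intro a
    have h := hind a n
    simpa using h
  have hval : ∀ a : Fin n, a < ρ a → ρ a = ρ' a := by
    intro a ha
    have ha' : a < ρ' a := (hlt a).mp ha
    have h1 : (ρ' a : ℕ) < (ρ a : ℕ) + 1 :=
      ((hind a ((ρ a : ℕ) + 1)).mp ⟨ha, Nat.lt_succ_self _⟩).2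
    have h2 : (ρ a : ℕ) < (ρ' a : ℕ) + 1 :=
      ((hind a ((ρ' a : ℕ) + 1)).mpr ⟨ha', Nat.lt_succ_self _⟩).2
    exact Fin.ext (Nat.le_antisymm (Nat.lt_succ_iff.mp h2) (Nat.lt_succ_iff.mp h1))
  ext a
  rcases lt_trichotomy a (ρ a) with h | h | h
  · exact congrArg _ (hval a h)
  · rcases lt_trichotomy a (ρ' a) with h' | h' | h'
    · have := (hlt a).mpr h'
      rw [← h] at this
      exact absurd this (lt_irrefl a)
    · rw [← h, ← h']
    · have hb : ρ' (ρ' a) = a := hρ'.1 a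
      have hblt : ρ' a < ρ' (ρ' a) := by rw [hb]; exact h'
      have hblt' : ρ' a < ρ (ρ' a) := (hlt _).mpr hblt
      have heq2 : ρ (ρ' a) = ρ' (ρ' a) := hval _ hblt'
      have hρb : ρ (ρ' a) = a := by rw [heq2, hb]
      have h3 := congrArg ρ hρb
      rw [hρ.1 (ρ' a)] at h3
      exact congrArg Fin.val h3.symm
  · have hb : ρ (ρ a) = a := hρ.1 a
    have hblt : ρ a < ρ (ρ a) := by rw [hb]; exact h
    have heq2 : ρ (ρ a) = ρ' (ρ a) := hval _ hblt
    have hρ'b : ρ' (ρ a) = a := by rw [← heq2, hb]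
    have h3 := congrArg ρ' hρ'b
    rw [hρ'.1 (ρ a)] at h3
    exact congrArg Fin.val h3

end AugSheaf
end

section
/- The augmentation category of the trivial n-strand bordered Legendrian is strictly isomorphic, as a DG category, to the Morse complex category: for any augmentations ε_1, ε_2, ε_3 of A_n(μ), the K-linear map h : hom₊(ε_1,ε_2) → End(C,F^•) defined by h(k_{ab}^∨) = (−1)^{s(a,b)} (e_b ⊗ e_a^*), where s(a,b) = μ(a)(μ(b)+1)+1, is a degree-preserving K-linear bijection onto the space of filtration-preserving endomorphisms of C, and it satisfies (i) h ∘ m_1 = D ∘ h, where D(f) = d(ε_2) ∘ f − (−1)^{|f|} f ∘ d(ε_1), and (ii) h(m_2(β ⊗ α)) = h(β) ∘ h(α) for all α ∈ hom₊(ε_1,ε_2) and β ∈ hom₊(ε_2,ε_3). Together with the bijection ε ↦ d(ε) on objects, h is a strict isomorphism of DG categories from Aug₊(I_n,μ;K) to the Morse complex category MC(I_n;K). -/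
/-!
Setup: `K` a field, `n ≥ 1`, `μ : Fin n → ℤ` a Maslov potential.  `C = ⊕ₐ K·eₐ` is the
graded vector space with `deg eₐ = -μ a` and decreasing filtration `Fⁱ C = span {eₐ : i ≤ a}`
(indices shifted to be `0`-based).  Linear maps `C → C` are encoded as matrices, where
`d b a` is the coefficient of `e b` in `d (e a)`.
-/

namespace AugSheaf

variable {K : Type*} [Field K] {n : ℕ}

/-- An augmentation of the border DGA `A_n(μ)`, encoded by its values `ε a b = ε (k_{ab})`
on the generators (`a < b`): it vanishes outside `a < b`, is supported in degree `0`
(i.e. `ε a b ≠ 0` forces `μ a = μ b + 1`), and satisfies `ε ∘ ∂ = 0` on the generators. -/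
def IsBorderAug (μ : Fin n → ℤ) (ε : Fin n → Fin n → K) : Prop :=
  (∀ a b : Fin n, ¬ a < b → ε a b = 0) ∧
  (∀ a b : Fin n, ε a b ≠ 0 → μ a = μ b + 1) ∧
  (∀ a b : Fin n, a < b →
    ∑ c ∈ Finset.Ioo a b, (-1 : K) ^ (μ a - μ c) * ε a c * ε c b = 0)

/-- The linear map `d(ε) : C → C`, `d(ε) eₐ = ∑_{b>a} (-1)^(μ a) ε (k_{ab}) e_b`,
associated to an augmentation `ε`. -/
def augDiff (μ : Fin n → ℤ) (ε : Fin n → Fin n → K) : Matrix (Fin n) (Fin n) K :=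
  fun b a => if a < b then (-1 : K) ^ (μ a) * ε a b else 0

/-- The hom space `hom₊(ε₁,ε₂) = ⊕_{a ≤ b} K·k_{ab}^∨` (with `k_{aa} := y_a` and
`|k_{ab}^∨| = μ a - μ b`) is encoded by its coefficient functions `x`, with
`x a b` the coefficient of `k_{ab}^∨`; elements are supported on pairs `a ≤ b`.
`m1` is the differential of the augmentation category, determined on generators by
`m₁ k_{ab}^∨ = -∑_{c<a} ε₁ c a • k_{cb}^∨ + (-1)^(μ a - μ b) ∑_{b<d} ε₂ b d • k_{ad}^∨`. -/
def m1 (μ : Fin n → ℤ) (ε₁ ε₂ x : Fin n → Fin n → K) : Fin n → Fin n → K :=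
  fun p q =>
    -(∑ a ∈ Finset.Ioi p, ε₁ p a * x a q) +
      ∑ b ∈ Finset.Iio q, (-1 : K) ^ (μ p - μ b) * ε₂ b q * x p b

/-- The composition `m₂ : hom₊(ε₂,ε₃) ⊗ hom₊(ε₁,ε₂) → hom₊(ε₁,ε₃)`, determined on
generators by `m₂ (k_{cd}^∨ ⊗ k_{ab}^∨) = δ_{bc} (-1)^(|k_{ab}^∨||k_{cd}^∨| + 1) k_{ad}^∨`. -/
def m2 (μ : Fin n → ℤ) (y x : Fin n → Fin n → K) : Fin n → Fin n → K :=
  fun p q => ∑ c : Fin n, (-1 : K) ^ ((μ p - μ c) * (μ c - μ q) + 1) * y c q * x p c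

/-- The functor `h`, determined on generators by
`h (k_{ab}^∨) = (-1)^(s a b) (e_b ⊗ eₐ^*)` with `s a b = μ a (μ b + 1) + 1`. -/
def hFunctor (μ : Fin n → ℤ) (x : Fin n → Fin n → K) : Matrix (Fin n) (Fin n) K :=
  fun b a => (-1 : K) ^ (μ a * (μ b + 1) + 1) * x a b

/-- **`Aug₊(I_n,μ;K)` is strictly isomorphic to the Morse complex DG category**:
`h` is a degree-preserving `K`-linear bijection from `hom₊(ε₁,ε₂)` onto the space
`End(C,F)` of filtration-preserving endomorphisms of `C`, it intertwines `m₁` with the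
Morse complex differential `D f = d(ε₂) ∘ f - (-1)^{|f|} f ∘ d(ε₁)` and `m₂` with
composition of endomorphisms; together with the bijection `ε ↦ d(ε)` on objects,
it is a strict isomorphism of DG categories. -/

private lemma neg1ne : (-1 : K) ≠ 0 := by norm_num

private lemma sq_one (a : ℤ) : (-1:K)^a * (-1:K)^a = 1 := by
  rw [← mul_zpow]; norm_num

private lemma zcongr {a b : ℤ} (h : Even (a - b)) : (-1:K)^a = (-1:K)^b := by
  obtain ⟨c, hc⟩ := h
  have ha : a = b + (c + c) := by omega
  rw [ha, zpow_add₀ neg1ne, zpow_add₀ neg1ne, sq_one, mul_one]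

private lemma diag_zero {μ : Fin n → ℤ} {d : Matrix (Fin n) (Fin n) K}
    (h : IsMorse μ d) (b : Fin n) : d b b = 0 := by
  by_contra hd
  have := h.1 b b hd
  omega

/-- The inverse of `augDiff`. -/
def εOf (μ : Fin n → ℤ) (d : Matrix (Fin n) (Fin n) K) : Fin n → Fin n → K :=
  fun a b => if a < b then (-1:K)^(μ a) * d b a else 0

private lemma isMorse_augDiff {μ : Fin n → ℤ} {ε : Fin n → Fin n → K}
    (h : IsBorderAug μ ε) : IsMorse μ (augDiff μ ε) := by
  refine ⟨?_, ?_, ?_⟩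
  · intro b a hd
    unfold augDiff at hd
    by_cases hab : a < b
    · rw [if_pos hab] at hd
      have hε : ε a b ≠ 0 := by
        intro h0; rw [h0, mul_zero] at hd; exact hd rfl
      have := h.2.1 a b hε
      omega
    · rw [if_neg hab] at hd; exact absurd rfl hd
  · intro b a hd
    unfold augDiff at hd
    by_cases hab : a < b
    · exact le_of_lt hab
    · rw [if_neg hab] at hd; exact absurd rfl hd
  · ext b a
    rw [Matrix.mul_apply, Matrix.zero_apply]
    have hsub : ∑ c ∈ Finset.Ioo a b, augDiff μ ε b c * augDiff μ ε c a
        = ∑ c, augDiff μ ε b c * augDiff μ ε c a := by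
      apply Finset.sum_subset (Finset.subset_univ _)
      intro c _ hc
      rw [Finset.mem_Ioo, not_and_or] at hc
      unfold augDiff
      rcases hc with hc | hc
      · rw [if_neg hc, mul_zero]
      · rw [if_neg hc, zero_mul]
    rw [← hsub]
    by_cases hab : a < b
    · have key := h.2.2 a b hab
      rw [← key]
      apply Finset.sum_congr rfl
      intro c hc
      rw [Finset.mem_Ioo] at hc
      unfold augDiff
      rw [if_pos hc.2, if_pos hc.1]
      have hs : (-1:K)^(μ c) * (-1:K)^(μ a) = (-1:K)^(μ a - μ c) := by
        rw [← zpow_add₀ neg1ne]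
        exact zcongr ⟨μ c, by ring⟩
      linear_combination (ε c b * ε a c) * hs
    · rw [Finset.Ioo_eq_empty hab, Finset.sum_empty]

private lemma isBorderAug_εOf {μ : Fin n → ℤ} {d : Matrix (Fin n) (Fin n) K}
    (h : IsMorse μ d) : IsBorderAug μ (εOf μ d) := by
  refine ⟨fun a b hab => if_neg hab, ?_, ?_⟩
  · intro a b hne
    unfold εOf at hne
    by_cases hab : a < b
    · rw [if_pos hab] at hne
      have hd : d b a ≠ 0 := by
        intro h0; rw [h0, mul_zero] at hne; exact hne rfl
      have := h.1 b a hd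
      omega
    · rw [if_neg hab] at hne; exact absurd rfl hne
  · intro a b hab
    have hterm : ∀ c ∈ Finset.Ioo a b,
        (-1:K)^(μ a - μ c) * εOf μ d a c * εOf μ d c b = d b c * d c a := by
      intro c hc
      rw [Finset.mem_Ioo] at hc
      unfold εOf
      rw [if_pos hc.1, if_pos hc.2]
      have hs : (-1:K)^(μ a - μ c) * (-1:K)^(μ a) * (-1:K)^(μ c) = 1 := by
        rw [← zpow_add₀ neg1ne, ← zpow_add₀ neg1ne]
        have he : μ a - μ c + μ a + μ c = μ a + μ a := by ring
        rw [he, zpow_add₀ neg1ne, sq_one]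
      linear_combination (d c a * d b c) * hs
    rw [Finset.sum_congr rfl hterm]
    have hext : ∑ c ∈ Finset.Ioo a b, d b c * d c a = ∑ c, d b c * d c a := by
      apply Finset.sum_subset (Finset.subset_univ _)
      intro c _ hc
      rw [Finset.mem_Ioo, not_and_or] at hc
      rcases hc with hc | hc
      · have hz : d c a = 0 := by
          by_contra h0
          have hle := h.2.1 c a h0
          have hca : a = c := le_antisymm hle (le_of_not_gt hc)
          rw [← hca] at h0
          exact h0 (diag_zero h a)
        rw [hz, mul_zero]
      · have hz : d b c = 0 := by
          by_contra h0
          have hle := h.2.1 b c h0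
          have hcb : c = b := le_antisymm hle (le_of_not_gt hc)
          rw [hcb] at h0
          exact h0 (diag_zero h b)
        rw [hz, zero_mul]
    rw [hext, ← Matrix.mul_apply, h.2.2, Matrix.zero_apply]

private lemma augDiff_εOf {μ : Fin n → ℤ} {d : Matrix (Fin n) (Fin n) K}
    (h : IsMorse μ d) : augDiff μ (εOf μ d) = d := by
  funext b a
  unfold augDiff εOf
  by_cases hab : a < b
  · rw [if_pos hab, if_pos hab, ← mul_assoc, sq_one, one_mul]
  · rw [if_neg hab]
    by_cases hba : a = b
    · rw [hba]
      exact (diag_zero h b).symm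
    · symm
      by_contra h0
      exact hab (lt_of_le_of_ne (h.2.1 b a h0) hba)

/-- **`Aug₊(I_n,μ;K)` is strictly isomorphic to the Morse complex DG category**. -/
theorem aug_cat_iso_morse_cat (hn : 1 ≤ n) (μ : Fin n → ℤ)
    (ε₁ ε₂ ε₃ : Fin n → Fin n → K)
    (h₁ : IsBorderAug μ ε₁) (h₂ : IsBorderAug μ ε₂) (h₃ : IsBorderAug μ ε₃) :
    -- the bijection `ε ↦ d(ε)` on objects
    Set.BijOn (augDiff (K := K) μ) {ε | IsBorderAug μ ε} {d | IsMorse μ d} ∧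
    -- `h` is a bijection from `hom₊` onto the filtration-preserving endomorphisms
    Set.BijOn (hFunctor (K := K) μ) {x | ∀ a b : Fin n, ¬ a ≤ b → x a b = 0}
      {f | ∀ b a : Fin n, f b a ≠ 0 → a ≤ b} ∧
    -- `h` is `K`-linear
    (∀ x y : Fin n → Fin n → K, hFunctor μ (x + y) = hFunctor μ x + hFunctor μ y) ∧
    (∀ (c : K) (x : Fin n → Fin n → K), hFunctor μ (c • x) = c • hFunctor μ x) ∧
    -- `h` is degree preserving
    (∀ (k : ℤ) (x : Fin n → Fin n → K), (∀ a b : Fin n, x a b ≠ 0 → μ a - μ b = k) →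
      ∀ b a : Fin n, hFunctor μ x b a ≠ 0 → μ a - μ b = k) ∧
    -- (i)  `h ∘ m₁ = D ∘ h` on homogeneous elements
    (∀ (k : ℤ) (x : Fin n → Fin n → K), (∀ a b : Fin n, ¬ a ≤ b → x a b = 0) →
      (∀ a b : Fin n, x a b ≠ 0 → μ a - μ b = k) →
      hFunctor μ (m1 μ ε₁ ε₂ x) =
        augDiff μ ε₂ * hFunctor μ x - ((-1 : K) ^ k) • (hFunctor μ x * augDiff μ ε₁)) ∧
    -- (ii) `h (m₂ (β ⊗ α)) = h β ∘ h α`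
    (∀ x y : Fin n → Fin n → K, (∀ a b : Fin n, ¬ a ≤ b → x a b = 0) →
      (∀ a b : Fin n, ¬ a ≤ b → y a b = 0) →
      hFunctor μ (m2 μ y x) = hFunctor μ y * hFunctor μ x) := by
  refine ⟨⟨?_, ?_, ?_⟩, ⟨?_, ?_, ?_⟩, ?_, ?_, ?_, ?_, ?_⟩
  -- augDiff MapsTo
  · intro ε hε
    exact isMorse_augDiff hε
  -- augDiff InjOn
  · intro ε hε ε' hε' heq
    funext a b
    by_cases hab : a < b
    · have hba := congrFun (congrFun heq b) a
      simp only [augDiff, if_pos hab] at hba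
      exact mul_left_cancel₀ (zpow_ne_zero _ neg1ne) hba
    · rw [hε.1 a b hab, hε'.1 a b hab]
  -- augDiff SurjOn
  · intro d hd
    exact ⟨εOf μ d, isBorderAug_εOf hd, augDiff_εOf hd⟩
  -- hFunctor MapsTo
  · intro x hx b a hba
    by_contra hab
    apply hba
    simp only [hFunctor, hx a b hab, mul_zero]
  -- hFunctor InjOn
  · intro x _ y _ heq
    funext a b
    have hba := congrFun (congrFun heq b) a
    simp only [hFunctor] at hba
    exact mul_left_cancel₀ (zpow_ne_zero _ neg1ne) hba
  -- hFunctor SurjOn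
  · intro f hf
    refine ⟨fun a b => (-1:K)^(μ a * (μ b + 1) + 1) * f b a, ?_, ?_⟩
    · intro a b hab
      have hz : f b a = 0 := by
        by_contra h0
        exact hab (hf b a h0)
      show (-1:K)^(μ a * (μ b + 1) + 1) * f b a = 0
      rw [hz, mul_zero]
    · funext b a
      show (-1:K)^(μ a * (μ b + 1) + 1) * ((-1:K)^(μ a * (μ b + 1) + 1) * f b a) = f b a
      rw [← mul_assoc, sq_one, one_mul]
  -- additivity
  · intro x y
    funext b a
    show (-1:K)^(μ a * (μ b + 1) + 1) * (x a b + y a b)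
        = (-1:K)^(μ a * (μ b + 1) + 1) * x a b + (-1:K)^(μ a * (μ b + 1) + 1) * y a b
    ring
  -- smul
  · intro c x
    funext b a
    show (-1:K)^(μ a * (μ b + 1) + 1) * (c * x a b)
        = c * ((-1:K)^(μ a * (μ b + 1) + 1) * x a b)
    ring
  -- degree preserving
  · intro k x hx b a hne
    simp only [hFunctor] at hne
    exact hx a b (right_ne_zero_of_mul hne)
  -- (i)
  · intro k x hsupp hhom
    ext b a
    rw [Matrix.sub_apply, Matrix.smul_apply, Matrix.mul_apply, Matrix.mul_apply, smul_eq_mul]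
    have e2 : ∑ c, augDiff μ ε₂ b c * hFunctor μ x c a
        = ∑ c ∈ Finset.Iio b, augDiff μ ε₂ b c * hFunctor μ x c a := by
      symm
      apply Finset.sum_subset (Finset.subset_univ _)
      intro c _ hc
      rw [Finset.mem_Iio] at hc
      simp only [augDiff, if_neg hc, zero_mul]
    have e1 : ∑ c, hFunctor μ x b c * augDiff μ ε₁ c a
        = ∑ c ∈ Finset.Ioi a, hFunctor μ x b c * augDiff μ ε₁ c a := by
      symm
      apply Finset.sum_subset (Finset.subset_univ _)
      intro c _ hc
      rw [Finset.mem_Ioi] at hc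
      simp only [augDiff, if_neg hc, mul_zero]
    rw [e1, e2]
    have lhs_eq : hFunctor μ (m1 μ ε₁ ε₂ x) b a
        = (-1:K)^(μ a * (μ b + 1) + 1) *
          (-(∑ c ∈ Finset.Ioi a, ε₁ a c * x c b) +
            ∑ c ∈ Finset.Iio b, (-1:K)^(μ a - μ c) * ε₂ c b * x a c) := rfl
    rw [lhs_eq]
    have hB : (-1:K)^(μ a * (μ b + 1) + 1) *
          ∑ c ∈ Finset.Iio b, (-1:K)^(μ a - μ c) * ε₂ c b * x a c
        = ∑ c ∈ Finset.Iio b, augDiff μ ε₂ b c * hFunctor μ x c a := by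
      rw [Finset.mul_sum]
      apply Finset.sum_congr rfl
      intro c hc
      rw [Finset.mem_Iio] at hc
      simp only [augDiff, hFunctor, if_pos hc]
      by_cases hε : ε₂ c b = 0
      · simp [hε]
      · have hm : μ c = μ b + 1 := h₂.2.1 c b hε
        have hs : (-1:K)^(μ a * (μ b + 1) + 1) * (-1:K)^(μ a - μ c)
            = (-1:K)^(μ c) * (-1:K)^(μ a * (μ c + 1) + 1) := by
          rw [← zpow_add₀ neg1ne, ← zpow_add₀ neg1ne]
          apply zcongr
          rw [hm]
          exact ⟨-μ b - 1, by ring⟩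
        linear_combination (ε₂ c b * x a c) * hs
    have hA : (-1:K)^(μ a * (μ b + 1) + 1) * ∑ c ∈ Finset.Ioi a, ε₁ a c * x c b
        = (-1:K)^k * ∑ c ∈ Finset.Ioi a, hFunctor μ x b c * augDiff μ ε₁ c a := by
      rw [Finset.mul_sum, Finset.mul_sum]
      apply Finset.sum_congr rfl
      intro c hc
      rw [Finset.mem_Ioi] at hc
      simp only [augDiff, hFunctor, if_pos hc]
      by_cases hε : ε₁ a c = 0
      · simp [hε]
      by_cases hx : x c b = 0
      · simp [hx]
      have hm : μ a = μ c + 1 := h₁.2.1 a c hε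
      have hk : μ c - μ b = k := hhom c b hx
      have hs : (-1:K)^(μ a * (μ b + 1) + 1)
          = (-1:K)^k * ((-1:K)^(μ c * (μ b + 1) + 1) * (-1:K)^(μ a)) := by
        rw [← zpow_add₀ neg1ne, ← zpow_add₀ neg1ne]
        apply zcongr
        rw [← hk, hm]
        exact ⟨μ b - μ c, by ring⟩
      linear_combination (ε₁ a c * x c b) * hs
    linear_combination hB - hA
  -- (ii)
  · intro x y hx hy
    ext b a
    rw [Matrix.mul_apply]
    have lhs_eq : hFunctor μ (m2 μ y x) b a
        = (-1:K)^(μ a * (μ b + 1) + 1) *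
          ∑ c, (-1:K)^((μ a - μ c) * (μ c - μ b) + 1) * y c b * x a c := rfl
    rw [lhs_eq, Finset.mul_sum]
    apply Finset.sum_congr rfl
    intro c _
    simp only [hFunctor]
    have hs : (-1:K)^(μ a * (μ b + 1) + 1) * (-1:K)^((μ a - μ c) * (μ c - μ b) + 1)
        = (-1:K)^(μ c * (μ b + 1) + 1) * (-1:K)^(μ a * (μ c + 1) + 1) := by
      rw [← zpow_add₀ neg1ne, ← zpow_add₀ neg1ne]
      apply zcongr
      have he : μ a * (μ b + 1) + 1 + ((μ a - μ c) * (μ c - μ b) + 1)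
          - (μ c * (μ b + 1) + 1 + (μ a * (μ c + 1) + 1)) = -(μ c * (μ c + 1)) := by ring
      rw [he]
      exact (Int.even_mul_succ_self (μ c)).neg
    linear_combination (y c b * x a c) * hs

end AugSheaf
end

section
/- The augmentation category of the border DGA is strictly unital: for every augmentation ε of A_n(μ), the element e_ε := −Σ_{c=1}^{n} k_{cc}^∨ ∈ hom₊(ε,ε) (i.e., minus the sum of the duals of the y-generators) satisfies m_1(e_ε) = 0, and for all augmentations ε_1, ε_2 of A_n(μ) and every α ∈ hom₊(ε_1,ε_2) one has m_2(α ⊗ e_{ε_1}) = α and m_2(e_{ε_2} ⊗ α) = α; that is, e_ε is a strict two-sided unit. -/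
/-!
Setup: `K` a field, `n ≥ 1`, `μ : Fin n → ℤ` a Maslov potential.  `C = ⊕ₐ K·eₐ` is the
graded vector space with `deg eₐ = -μ a` and decreasing filtration `Fⁱ C = span {eₐ : i ≤ a}`
(indices shifted to be `0`-based).  Linear maps `C → C` are encoded as matrices, where
`d b a` is the coefficient of `e b` in `d (e a)`.
-/

namespace AugSheaf

variable {K : Type*} [Field K] {n : ℕ}

/-- The element `e_ε = -∑_c k_{cc}^∨ ∈ hom₊(ε,ε)` (minus the sum of the duals of the
`y`-generators), encoded by its coefficient function. -/
def augUnit (K : Type*) [Field K] (n : ℕ) : Fin n → Fin n → K :=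
  fun a b => if a = b then (-1 : K) else 0

/-- **The augmentation category of the border DGA is strictly unital**:
`e_ε = -∑_c k_{cc}^∨` is a cocycle (`m₁ e_ε = 0`) and a strict two-sided unit:
`m₂ (α ⊗ e_{ε₁}) = α` and `m₂ (e_{ε₂} ⊗ α) = α` for every `α ∈ hom₊(ε₁,ε₂)`. -/
theorem aug_category_strictly_unital (hn : 1 ≤ n) (μ : Fin n → ℤ) :
    (∀ ε : Fin n → Fin n → K, IsBorderAug μ ε → m1 μ ε ε (augUnit K n) = 0) ∧
    (∀ ε₁ ε₂ α : Fin n → Fin n → K, IsBorderAug μ ε₁ → IsBorderAug μ ε₂ →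
      (∀ a b : Fin n, ¬ a ≤ b → α a b = 0) →
      m2 μ α (augUnit K n) = α ∧ m2 μ (augUnit K n) α = α) := by
  constructor
  · intro ε hε
    funext p q
    simp only [m1, augUnit, mul_ite, mul_one, mul_neg, mul_zero,
      Finset.sum_ite_eq', Finset.mem_Ioi, Finset.mem_Iio, Pi.zero_apply]
    by_cases h : p < q
    · simp [h, sub_self]
    · simp [h]
  · intro ε₁ ε₂ α h1 h2 hα
    constructor
    · funext p q
      simp only [m2, augUnit, mul_ite, mul_one, mul_neg, mul_zero, ite_mul, zero_mul]
      rw [Finset.sum_eq_single p]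
      · simp [sub_self]
      · intro c _ hc; simp [Ne.symm hc]
      · simp
    · funext p q
      simp only [m2, augUnit, mul_ite, mul_one, mul_neg, mul_zero, ite_mul, zero_mul,
        neg_mul, one_mul]
      rw [Finset.sum_eq_single q]
      · simp [sub_self]
      · intro c _ hc; simp [hc]
      · simp

end AugSheaf
end

section
/- Block splitting of canonical Morse complexes with acyclic tail (used in the proof of 'augmentations are sheaves' for a vertex piece): let ρ ∈ GNR(C), let 0 ≤ k ≤ n, and suppose the subcomplex (F^k C, d_ρ|_{F^k C}) spanned by e_{k+1},…,e_n is acyclic. Then ρ restricts to a fixed-point-free involution of {k+1,…,n} (and hence also preserves {1,…,k}), and the canonical complex (C, d_ρ) is the direct sum of the two canonical complexes on span(e_1,…,e_k) and span(e_{k+1},…,e_n) determined by the restrictions of ρ to these index sets. -/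
/-!
Setup: `K` a field, `n ≥ 1`, `μ : Fin n → ℤ` a Maslov potential.  `C = ⊕ₐ K·eₐ` is the
graded vector space with `deg eₐ = -μ a` and decreasing filtration `Fⁱ C = span {eₐ : i ≤ a}`
(indices shifted to be `0`-based).  Linear maps `C → C` are encoded as matrices, where
`d b a` is the coefficient of `e b` in `d (e a)`.
-/

namespace AugSheaf

variable {K : Type*} [Field K] {n : ℕ}

/-- **Block splitting of canonical Morse complexes with acyclic tail**: if `ρ ∈ GNR(C)`,
`0 ≤ k ≤ n`, and the subcomplex `(F^k C, d_ρ)` spanned by `e_{k+1}, …, e_n` (here: the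
basis vectors with `0`-based index `≥ k`) is acyclic — i.e. the kernel of `d_ρ` on `F^k C`
equals `d_ρ (F^k C)` — then `ρ` restricts to a fixed-point-free involution of the upper
index block (hence also preserves the lower block), and `d_ρ` is block diagonal, i.e. the
direct sum of the two canonical complexes determined by the restrictions of `ρ`. -/
theorem canon_block_splitting (hn : 1 ≤ n) (μ : Fin n → ℤ) (ρ : Equiv.Perm (Fin n))
    (hρ : IsGNR μ ρ) (k : ℕ) (hk : k ≤ n)
    (hacyc : {v : Fin n → K | (∀ i : Fin n, (i : ℕ) < k → v i = 0) ∧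
        (canonDiff K μ ρ).mulVec v = 0} =
      {v : Fin n → K | ∃ w : Fin n → K, (∀ i : Fin n, (i : ℕ) < k → w i = 0) ∧
        (canonDiff K μ ρ).mulVec w = v}) :
    (∀ a : Fin n, k ≤ (a : ℕ) → ρ a ≠ a ∧ k ≤ ((ρ a : Fin n) : ℕ)) ∧
    (∀ a : Fin n, (a : ℕ) < k → ((ρ a : Fin n) : ℕ) < k) ∧
    (∀ b a : Fin n, ¬ (((a : ℕ) < k) ↔ ((b : ℕ) < k)) → canonDiff K μ ρ b a = 0) := by
  obtain ⟨hinv, -⟩ := hρ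
  have hmv : ∀ (w : Fin n → K) (b : Fin n),
      (canonDiff K μ ρ).mulVec w b =
        if ρ b < b then (-1 : K) ^ (μ (ρ b)) * w (ρ b) else 0 := by
    intro w b
    show ∑ c, canonDiff K μ ρ b c * w c = _
    rw [Finset.sum_eq_single (ρ b)]
    · simp only [canonDiff, hinv b, true_and]
      by_cases h : ρ b < b <;> simp [h]
    · intro c _ hc
      have : ρ c ≠ b := fun h => hc (by rw [← h, hinv])
      simp [canonDiff, this]
    · simp
  have key : ∀ a : Fin n, k ≤ (a : ℕ) → ρ a ≠ a ∧ k ≤ ((ρ a : Fin n) : ℕ) := by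
    intro a ha
    by_contra hcon
    push_neg at hcon
    have hmem : Pi.single a (1 : K) ∈
        {v : Fin n → K | (∀ i : Fin n, (i : ℕ) < k → v i = 0) ∧
          (canonDiff K μ ρ).mulVec v = 0} := by
      constructor
      · intro i hi
        have : i ≠ a := by
          intro h; subst h; omega
        simp [Pi.single_eq_of_ne this]
      · funext b
        rw [hmv]
        by_cases h : ρ b < b
        · simp only [h, if_true]
          have : ρ b ≠ a := by
            intro he
            have hb : b = ρ a := by rw [← he, hinv]
            by_cases hfix : ρ a = a
            · rw [hb, hinv, hfix] at h; exact absurd h (lt_irrefl a)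
            · have hlt : ((ρ a : Fin n) : ℕ) < k := by
                have := hcon hfix; omega
              have : (a : ℕ) < (b : ℕ) := Fin.lt_def.mp (he ▸ h)
              rw [hb] at this
              omega
          simp [Pi.single_eq_of_ne this]
        · simp [h]
    rw [hacyc] at hmem
    obtain ⟨w, hw0, hw⟩ := hmem
    have h1 : (canonDiff K μ ρ).mulVec w a = 1 := by rw [hw]; simp
    rw [hmv] at h1
    by_cases hfix : ρ a = a
    · rw [hfix] at h1
      simp at h1
    · have hlt : ((ρ a : Fin n) : ℕ) < k := by have := hcon hfix; omega
      have hra : ρ a < a := Fin.lt_def.mpr (by omega)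
      rw [if_pos hra, hw0 _ hlt, mul_zero] at h1
      exact one_ne_zero h1.symm
  refine ⟨key, ?_, ?_⟩
  · intro a ha
    by_contra h
    push_neg at h
    have := (key (ρ a) h).2
    rw [hinv] at this
    omega
  · intro b a hiff
    by_contra h
    simp only [canonDiff, ite_eq_right_iff, not_forall] at h
    obtain ⟨⟨hb, -⟩, -⟩ := h
    subst hb
    by_cases ha : (a : ℕ) < k
    · have h2 : ∀ a : Fin n, (a : ℕ) < k → ((ρ a : Fin n) : ℕ) < k := by
        intro a ha
        by_contra h'
        push_neg at h'
        have := (key (ρ a) h').2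
        rw [hinv] at this
        omega
      exact hiff ⟨fun _ => h2 a ha, fun _ => ha⟩
    · have := (key a (by omega)).2
      exact hiff ⟨fun h' => absurd h' ha, fun h' => absurd h' (by omega)⟩

end AugSheaf
end
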